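/- Let Q^{(1)}_1,…,Q^{(n)}_1 ∈ ℤ[x_1^{±1},…,x_n^{±1}] be Weyl-group-invariant Laurent polynomials such that Q^{(a)}_1 = x_a (1 + Σ_β c_β e^{−β}) with the sum over nonzero β ∈ Σ_{b=1}^n ℤ_{≥0}α_b (as holds, for instance, when Q^{(a)}_1 = Σ_λ d_λ ch V(λ) with d_{Λ̄_a} = 1 and d_λ = 0 unless λ ∈ Λ̄_a − Σ_b ℤ_{≥0}α_b). Then det_{1≤a,b≤n} (∂Q^{(a)}_1/∂x_b) = ∏_{α>0} (1 − e^{−α}), the product running over all positive roots α of X_n. -/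

import Mathlib

open scoped BigOperators

namespace FermionicPaper

/-- The combinatorial data of a finite-dimensional simple Lie algebra `X_n` of type
`A_n, B_n, C_n, D_n, E_{6,7,8}, F_4, G_2`: the rank `n`, the numbers
`t_a = 2/(α_a|α_a) ∈ {1,2,3}` and the Cartan matrix `C_{ab} = t_a (α_a|α_b)`,
where `(·|·)` is the invariant bilinear form normalized by `(α|α) = 2` for long roots.
The axioms characterize exactly the Cartan data of the finite-dimensional simple Lie
algebras (symmetrizability, positive definiteness, connectedness, normalization). -/
structure CartanDatum (n : ℕ) : Type where
  t : Fin n → ℕ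
  C : Fin n → Fin n → ℤ
  t_pos : ∀ a, 0 < t a
  diag : ∀ a, C a a = 2
  offdiag_nonpos : ∀ a b, a ≠ b → C a b ≤ 0
  symm : ∀ a b, (t b : ℤ) * C a b = (t a : ℤ) * C b a
  posdef : ∀ v : Fin n → ℚ, v ≠ 0 → 0 < ∑ a, ∑ b, v a * ((C a b : ℚ) / (t a : ℚ)) * v b
  connected : ∀ S : Set (Fin n), S.Nonempty → (∀ a ∈ S, ∀ b, b ∉ S → C a b = 0) → ∀ a, a ∈ S
  normalized : ∃ a, t a = 1

variable {n : ℕ}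

/-- The invariant form `(α_a | α_b)`. -/
def CartanDatum.form (D : CartanDatum n) (a b : Fin n) : ℚ := (D.C a b : ℚ) / (D.t a : ℚ)

/-- `t = max_a t_a`. -/
def CartanDatum.tmax (D : CartanDatum n) : ℕ := Finset.univ.sup D.t

/-- The Cartan matrix as a rational matrix. -/
def CartanDatum.Cmat (D : CartanDatum n) : Matrix (Fin n) (Fin n) ℚ :=
  Matrix.of fun a b => (D.C a b : ℚ)

/-- The inverse Cartan matrix `C^{-1}`. -/
noncomputable def CartanDatum.Cinv (D : CartanDatum n) : Matrix (Fin n) (Fin n) ℚ := (D.Cmat)⁻¹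

/-- The invariant form on the weight space `P̄ ⊗ ℚ`, in the basis of fundamental weights;
`(Λ̄_a | Λ̄_b) = C^{-1}_{ab} / t_a`. -/
noncomputable def CartanDatum.wform (D : CartanDatum n) (μ ν : Fin n → ℚ) : ℚ :=
  ∑ a, ∑ b, μ a * (D.Cinv a b / (D.t a : ℚ)) * ν b

/-- The field `K = ℚ((q^{ℚ}))` of Hahn series in which all the `q`-series identities are stated. -/
abbrev K : Type := HahnSeries ℚ ℚ

/-- The monomial `q^c` for a rational exponent `c`. -/
noncomputable def hq (c : ℚ) : K := HahnSeries.single c 1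

/-- The extended `q`-binomial coefficient `{p+m choose m}` evaluated at `q^ε`
(`ε = 1` gives `q`, `ε = -1` gives `q^{-1}`); for `m ∈ ℤ_{≥0}` and integral `p` it equals
`(q^{p+1})_∞ (q^{m+1})_∞ / ((q)_∞ (q^{p+m+1})_∞) = ∏_{i=1}^m (1-q^{p+i})/(1-q^i)`. -/
noncomputable def qbinE (ε p : ℚ) (m : ℕ) : K :=
  ∏ i ∈ Finset.range m, (1 - hq (ε * (p + i + 1))) / (1 - hq (ε * (i + 1)))

/-- The truncated `q`-binomial coefficient `[p+m choose m]` at `q^ε`: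
it equals `{p+m choose m}` for `p ≥ 0` and `0` for `p < 0`. -/
noncomputable def qbinT (ε p : ℚ) (m : ℕ) : K := if 0 ≤ p then qbinE ε p m else 0

/-- `(q)_k = ∏_{j=1}^k (1 - q^j)`, at `q^ε`. -/
noncomputable def qpoch (ε : ℚ) (k : ℕ) : K := ∏ i ∈ Finset.range k, (1 - hq (ε * (i + 1)))

/-- `{p+m choose m}_1 = Γ(p+m+1)/(Γ(p+1)Γ(m+1)) = ∏_{i=1}^m (p+i)/i`, the `q = 1` value. -/
def bin1 (p : ℚ) (m : ℕ) : ℚ := ∏ i ∈ Finset.range m, (p + i + 1) / (i + 1)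

/-- A family `m^{(a)}_i` (or `ν^{(a)}_i`) has finitely many nonzero members. -/
def FinSupp (m : Fin n → ℕ → ℕ) : Prop :=
  (Function.support fun x : Fin n × ℕ => m x.1 x.2).Finite

variable (D : CartanDatum n)

/-- The vacancy numbers
`p^{(a)}_i = Σ_j ν^{(a)}_j min(i,j) − Σ_b (α_a|α_b) Σ_k min(t_b i, t_a k) m^{(b)}_k`. -/
noncomputable def pinf (ν m : Fin n → ℕ → ℕ) (a : Fin n) (i : ℕ) : ℚ :=
  (∑ᶠ j : ℕ, (ν a j : ℚ) * (min i j : ℕ))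
    - ∑ b, ∑ᶠ k : ℕ, D.form a b * (min (D.t b * i) (D.t a * k) : ℕ) * (m b k)

/-- The quadratic form
`c({m}) = ½ Σ_{a,b} (α_a|α_b) Σ_{j,k} min(t_b j, t_a k) m^{(a)}_j m^{(b)}_k
  − Σ_a Σ_{j,k} ν^{(a)}_j min(j,k) m^{(a)}_k` (allowing rational arguments `m`). -/
noncomputable def cinf (ν : Fin n → ℕ → ℕ) (m : Fin n → ℕ → ℚ) : ℚ :=
  (1/2) * (∑ a, ∑ b, ∑ᶠ j : ℕ, ∑ᶠ k : ℕ,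
      D.form a b * (min (D.t b * j) (D.t a * k) : ℕ) * m a j * m b k)
    - ∑ a, ∑ᶠ j : ℕ, ∑ᶠ k : ℕ, (ν a j : ℚ) * (min j k : ℕ) * m a k

/-- `c({m})` for integral `m`. -/
noncomputable def cinfN (ν m : Fin n → ℕ → ℕ) : ℚ := cinf D ν (fun a j => (m a j : ℚ))

/-- The constraint `Σ_{a,i} i m^{(a)}_i α_a = Σ_{a,i} i ν^{(a)}_i Λ̄_a − λ`, written in
the coordinates of the fundamental weight basis (`α_a = Σ_b C_{ba} Λ̄_b`). -/
def Constr (ν m : Fin n → ℕ → ℕ) (lam : Fin n → ℚ) : Prop :=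
  ∀ b, (∑ a, ∑ᶠ i : ℕ, (i : ℚ) * m a i * D.C b a) = (∑ᶠ i : ℕ, (i : ℚ) * ν b i) - lam b

/-- The admissible configurations for the fermionic form `M(W,λ,q)`. -/
def admM (ν : Fin n → ℕ → ℕ) (lam : Fin n → ℚ) : Set (Fin n → ℕ → ℕ) :=
  {m | FinSupp m ∧ Constr D ν m lam ∧ ∀ a, ∀ i : ℕ, 1 ≤ i → 0 ≤ pinf D ν m a i}

/-- The fermionic form `M(W,λ,q^ε)` for `W = ⊗_{a,j} (W^{(a)}_j)^{⊗ ν^{(a)}_j}` and `λ ∈ P̄`. -/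
noncomputable def M (ε : ℚ) (ν : Fin n → ℕ → ℕ) (lam : Fin n → ℚ) : K :=
  ∑ᶠ m ∈ admM D ν lam,
    hq (ε * cinfN D ν m) *
      ∏ᶠ a : Fin n, ∏ᶠ i ∈ {i : ℕ | 1 ≤ i}, qbinT ε (pinf D ν m a i) (m a i)

/-- Level-`l` restricted vacancy numbers (all indices restricted to `H_l`). -/
noncomputable def pl (l : ℕ) (ν m : Fin n → ℕ → ℕ) (a : Fin n) (i : ℕ) : ℚ :=
  (∑ j ∈ Finset.Icc 1 (D.t a * l), (ν a j : ℚ) * (min j i : ℕ))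
    - ∑ b, ∑ k ∈ Finset.Icc 1 (D.t b * l),
        D.form a b * (min (D.t b * i) (D.t a * k) : ℕ) * (m b k)

/-- Level-`l` restricted quadratic form `c_l({m})`. -/
noncomputable def cl (l : ℕ) (ν m : Fin n → ℕ → ℕ) : ℚ :=
  (1/2) * (∑ a, ∑ b, ∑ j ∈ Finset.Icc 1 (D.t a * l), ∑ k ∈ Finset.Icc 1 (D.t b * l),
      D.form a b * (min (D.t b * j) (D.t a * k) : ℕ) * (m a j) * (m b k))
    - ∑ a, ∑ j ∈ Finset.Icc 1 (D.t a * l), ∑ k ∈ Finset.Icc 1 (D.t a * l),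
        (ν a j : ℚ) * (min j k : ℕ) * (m a k)

/-- A family is supported in `H_l = {(a,j) | 1 ≤ j ≤ t_a l}`. -/
def SuppIn (l : ℕ) (m : Fin n → ℕ → ℕ) : Prop :=
  ∀ a j, m a j ≠ 0 → 1 ≤ j ∧ j ≤ D.t a * l

/-- Level-`l` constraint `Σ_{(a,i)∈H_l} i m^{(a)}_i α_a = Σ_{(a,i)∈H_l} i ν^{(a)}_i Λ̄_a − λ`. -/
def ConstrL (l : ℕ) (ν m : Fin n → ℕ → ℕ) (lam : Fin n → ℚ) : Prop :=
  ∀ b, (∑ a, ∑ i ∈ Finset.Icc 1 (D.t a * l), (i : ℚ) * m a i * D.C b a)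
      = (∑ i ∈ Finset.Icc 1 (D.t b * l), (i : ℚ) * ν b i) - lam b

/-- The level-`l` restricted fermionic form `M_l(W,q^ε)`. -/
noncomputable def Ml (ε : ℚ) (l : ℕ) (ν : Fin n → ℕ → ℕ) : K :=
  ∑ᶠ m ∈ {m | SuppIn D l m ∧ ConstrL D l ν m 0 ∧
      ∀ a, ∀ i ∈ Finset.Icc 1 (D.t a * l), 0 ≤ pl D l ν m a i},
    hq (ε * cl D l ν m) *
      ∏ a, ∏ i ∈ Finset.Icc 1 (D.t a * l), qbinT ε (pl D l ν m a i) (m a i)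

/-- The fermionic form `N_l(W,λ,q^ε)`: no positivity imposed on the vacancy numbers, and
extended `q`-binomial coefficients are used. -/
noncomputable def Nl (ε : ℚ) (l : ℕ) (ν : Fin n → ℕ → ℕ) (lam : Fin n → ℚ) : K :=
  ∑ᶠ m ∈ {m | SuppIn D l m ∧ ConstrL D l ν m lam},
    hq (ε * cl D l ν m) *
      ∏ a, ∏ i ∈ Finset.Icc 1 (D.t a * l), qbinE ε (pl D l ν m a i) (m a i)

/-- `N_∞(W,λ,q)` at `q = 1`. -/
noncomputable def Ninf1 (ν : Fin n → ℕ → ℕ) (lam : Fin n → ℚ) : ℚ :=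
  ∑ᶠ m ∈ {m | FinSupp m ∧ Constr D ν m lam},
    ∏ᶠ a : Fin n, ∏ᶠ i ∈ {i : ℕ | 1 ≤ i}, bin1 (pinf D ν m a i) (m a i)

/-- `N_l(W,λ,q)` at `q = 1`. -/
noncomputable def Nl1 (l : ℕ) (ν : Fin n → ℕ → ℕ) (lam : Fin n → ℚ) : ℚ :=
  ∑ᶠ m ∈ {m | SuppIn D l m ∧ ConstrL D l ν m lam},
    ∏ a, ∏ i ∈ Finset.Icc 1 (D.t a * l), bin1 (pl D l ν m a i) (m a i)

/-- The data of `W₁ = W^{(a₀)}_{j₀} ⊗ W^{(a₀)}_{j₀} ⊗ W`. -/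
def nu1 (ν : Fin n → ℕ → ℕ) (a₀ : Fin n) (j₀ : ℕ) : Fin n → ℕ → ℕ :=
  fun a j => ν a j + if a = a₀ ∧ j = j₀ then 2 else 0

/-- The data of `W₂ = W^{(a₀)}_{j₀+1} ⊗ W^{(a₀)}_{j₀−1} ⊗ W` (a factor with index `0`
being inert/omitted). -/
def nu2 (ν : Fin n → ℕ → ℕ) (a₀ : Fin n) (j₀ : ℕ) : Fin n → ℕ → ℕ :=
  fun a j => ν a j + (if a = a₀ ∧ j = j₀ + 1 then 1 else 0)
    + (if a = a₀ ∧ j = j₀ - 1 then 1 else 0)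

/-- The data of `W₃ = ⊗_{b ∼ a₀} ⊗_{k=0}^{-C_{a₀b}-1} W^{(b)}_{⌊(C_{b a₀} j₀ − k)/C_{a₀ b}⌋} ⊗ W`
(a factor with index `0` being inert/omitted); repeated indices are counted with
multiplicity. -/
def nu3 (ν : Fin n → ℕ → ℕ) (a₀ : Fin n) (j₀ : ℕ) : Fin n → ℕ → ℕ :=
  fun b j => ν b j +
    if D.C a₀ b < 0 then
      ((Finset.range (-(D.C a₀ b)).toNat).filter
        (fun k : ℕ => (((D.C b a₀) * (j₀ : ℤ) - (k : ℤ)).fdiv (D.C a₀ b)).toNat = j)).card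
    else 0

/-! ### Characters of `X_n` as functions on the Cartan subalgebra.

Weights are written in the coordinates of the fundamental weight basis, so a weight
`μ = Σ_a μ_a Λ̄_a` is the vector `(μ_a)_a`.  Putting `x_a = e^{Λ̄_a} = e^{h_a}`, the
monomial `e^{μ}` is the function `h ↦ exp(Σ_a μ_a h_a)` of `h ∈ ℂ^n`. -/

/-- `e^{μ}` as a function of `h`. -/
noncomputable def ewc (μ : Fin n → ℚ) (h : Fin n → ℂ) : ℂ :=
  Complex.exp (∑ a, (μ a : ℂ) * h a)

/-- The simple reflection `s_a` on the weight space (in `Λ̄`-coordinates):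
`s_a(μ) = μ − μ_a α_a`, `α_a = Σ_b C_{ba} Λ̄_b`. -/
noncomputable def reflMap (D : CartanDatum n) (a : Fin n) :
    (Fin n → ℚ) →ₗ[ℚ] (Fin n → ℚ) :=
  LinearMap.id - (LinearMap.proj a).smulRight (fun b => (D.C b a : ℚ))

/-- The Weyl group of `X_n`, realized as the monoid generated by the simple
reflections (it is a group since the generators are involutions). -/
noncomputable def weylGroup (D : CartanDatum n) :
    Submonoid ((Fin n → ℚ) →ₗ[ℚ] (Fin n → ℚ)) :=
  Submonoid.closure (Set.range (reflMap D))

/-- The Weyl numerator `Σ_{w ∈ W} (det w) e^{wμ}`. -/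
noncomputable def weylNum (D : CartanDatum n) (μ : Fin n → ℚ) (h : Fin n → ℂ) : ℂ :=
  ∑ᶠ w ∈ (weylGroup D : Set ((Fin n → ℚ) →ₗ[ℚ] (Fin n → ℚ))),
    ((LinearMap.det w : ℚ) : ℂ) * ewc (w μ) h

/-- The irreducible character `ch V(λ)` of `X_n`, by the Weyl character formula
(`ρ̄ = Σ_a Λ̄_a` has all coordinates `1`). -/
noncomputable def chV (D : CartanDatum n) (lam : Fin n → ℚ) (h : Fin n → ℂ) : ℂ :=
  weylNum D (fun a => lam a + 1) h / weylNum D (fun _ => 1) h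

/-- The set of roots of `X_n`: the Weyl group orbit of the simple roots
(in `Λ̄`-coordinates). -/
def rootSet (D : CartanDatum n) : Set (Fin n → ℚ) :=
  {β | ∃ w ∈ (weylGroup D : Set ((Fin n → ℚ) →ₗ[ℚ] (Fin n → ℚ))),
    ∃ a : Fin n, β = w (fun b => (D.C b a : ℚ))}

/-- The set of positive roots of `X_n`. -/
def posRootSet (D : CartanDatum n) : Set (Fin n → ℚ) :=
  {β | β ∈ rootSet D ∧ ∃ c : Fin n → ℚ, (∀ b, 0 ≤ c b) ∧
    ∀ b, β b = ∑ a, (D.C b a : ℚ) * c a}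

/-- The ring `ℤ[x_1^{±1},…,x_n^{±1}] = ℤ[P̄]` of Laurent polynomials, i.e. the group
ring of the weight lattice, with `e^{μ} = x^{μ}` the basis monomials. -/
abbrev LaurentA (n : ℕ) : Type := AddMonoidAlgebra ℤ (Fin n → ℤ)

/-- The partial derivative `∂/∂x_b` on `ℤ[x_1^{±1},…,x_n^{±1}]`:
`x^{μ} ↦ μ_b x^{μ − e_b}`. -/
noncomputable def pder (b : Fin n) (f : LaurentA n) : LaurentA n :=
  AddMonoidAlgebra.ofCoeff (Finsupp.sum f.coeff fun μ c => Finsupp.single (μ - Pi.single b 1) (c * μ b))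

/-- The action of the simple reflection `w_a` on `ℤ[P̄]`, `e^{μ} ↦ e^{w_a(μ)}`. -/
noncomputable def reflW (D : CartanDatum n) (a : Fin n) (f : LaurentA n) : LaurentA n :=
  AddMonoidAlgebra.ofCoeff (Finsupp.sum f.coeff fun μ c => Finsupp.single (fun b => μ b - μ a * D.C b a) c)

instance laurentCoeFun : CoeFun (LaurentA n) (fun _ => (Fin n → ℤ) → ℤ) := ⟨fun f => f.coeff⟩

section Statement17Aux

open AddMonoidAlgebra

variable {n : ℕ} (D : CartanDatum n)

/-- Basis vector of the exponent lattice. -/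
def eps (c : Fin n) : Fin n → ℤ := Pi.single c 1

/-- The simple reflection `w_a` on the exponent lattice. -/
def sgm (a : Fin n) (v : Fin n → ℤ) : Fin n → ℤ := fun b => v b - v a * D.C b a

lemma sgm_add (a : Fin n) (v w : Fin n → ℤ) :
    sgm D a (v + w) = sgm D a v + sgm D a w := by
  funext b; simp only [sgm, Pi.add_apply]; ring

lemma sgm_sub (a : Fin n) (v w : Fin n → ℤ) :
    sgm D a (v - w) = sgm D a v - sgm D a w := by
  funext b; simp only [sgm, Pi.sub_apply]; ring

lemma sgm_sgm (a : Fin n) (v : Fin n → ℤ) : sgm D a (sgm D a v) = v := by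
  funext b; simp only [sgm, D.diag]; ring

lemma sgm_inj (a : Fin n) : Function.Injective (sgm D a) :=
  Function.Involutive.injective (sgm_sgm D a)

/-- `sgm` as an additive monoid hom. -/
def sgmHom (a : Fin n) : (Fin n → ℤ) →+ (Fin n → ℤ) :=
  AddMonoidHom.mk' (sgm D a) (sgm_add D a)

lemma reflW_eq (a : Fin n) (f : LaurentA n) :
    reflW D a f = AddMonoidAlgebra.mapDomain (sgm D a) f := rfl

/-- `reflW` as a ring hom. -/
noncomputable def reflWHom (a : Fin n) : LaurentA n →+* LaurentA n :=
  AddMonoidAlgebra.mapDomainRingHom ℤ (sgmHom D a)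

lemma reflW_eq_hom (a : Fin n) (f : LaurentA n) : reflW D a f = reflWHom D a f := rfl

lemma reflW_coeff (a : Fin n) (f : LaurentA n) (v : Fin n → ℤ) :
    reflW D a f v = f (sgm D a v) := by
  have h := Finsupp.mapDomain_apply (sgm_inj D a) f.coeff (sgm D a v)
  rw [sgm_sgm] at h
  rw [reflW_eq]; exact h

lemma pder_coeff (b : Fin n) (f : LaurentA n) (v : Fin n → ℤ) :
    pder b f v = f (v + eps b) * (v + eps b) b := by
  classical
  rw [pder, AddMonoidAlgebra.coeff_ofCoeff, Finsupp.sum_apply, Finsupp.sum]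
  rw [Finset.sum_eq_single (v + eps b)]
  · rw [Finsupp.single_apply, if_pos]
    funext d; simp [eps]
  · intro μ _ hne
    rw [Finsupp.single_apply, if_neg]
    intro h
    apply hne
    funext d
    have := congrFun h d
    simp only [Pi.sub_apply] at this
    simp [eps, ← this]
  · intro h
    rw [Finsupp.notMem_support_iff] at h
    simp [h]

lemma sgm_expand (a : Fin n) (x : Fin n → ℤ) (b : Fin n) :
    ∑ c, x c * (sgm D a (eps c)) b = sgm D a x b := by
  classical
  have h : ∀ c : Fin n, x c * (sgm D a (eps c)) b
      = (if b = c then x c else 0) - (if a = c then x c * D.C b a else 0) := by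
    intro c
    simp only [sgm, eps, Pi.single_apply]
    by_cases hcb : b = c <;> by_cases hca : a = c <;> simp [hcb, hca] <;> ring
  simp only [h, Finset.sum_sub_distrib, Finset.sum_ite_eq, Finset.mem_univ, if_true]
  rfl

lemma chain_rule (a b : Fin n) (f : LaurentA n) :
    pder b (reflW D a f)
      = ∑ c, reflW D a (pder c f) *
          AddMonoidAlgebra.single (sgm D a (eps c) - eps b) ((sgm D a (eps c)) b) := by
  classical
  ext v
  rw [AddMonoidAlgebra.coeff_sum, Finsupp.finset_sum_apply]
  rw [pder_coeff, reflW_coeff]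
  have hterm : ∀ c : Fin n,
      (reflW D a (pder c f) *
        AddMonoidAlgebra.single (sgm D a (eps c) - eps b) ((sgm D a (eps c)) b)) v
      = f (sgm D a (v + eps b)) * ((sgm D a (v + eps b)) c * (sgm D a (eps c)) b) := by
    intro c
    rw [AddMonoidAlgebra.coeff_mul_single_apply, reflW_coeff, pder_coeff]
    have harg : sgm D a (v - (sgm D a (eps c) - eps b)) + eps c = sgm D a (v + eps b) := by
      rw [sgm_sub, sgm_sub, sgm_sgm, sgm_add]
      abel
    rw [← sub_eq_add_neg, harg, mul_assoc]
  rw [Finset.sum_congr rfl fun c _ => hterm c, ← Finset.mul_sum]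
  rw [sgm_expand, sgm_sgm]

end Statement17Aux


section Statement17Aux2

open AddMonoidAlgebra

variable {n : ℕ} (D : CartanDatum n)

/-- The substitution Jacobian of the reflection `w_a`. -/
noncomputable def Amat (a : Fin n) : Matrix (Fin n) (Fin n) (LaurentA n) :=
  Matrix.of fun c b => AddMonoidAlgebra.single (sgm D a (eps c) - eps b) ((sgm D a (eps c)) b)

lemma det_updateRow_one {R : Type*} [CommRing R] {ι : Type*} [DecidableEq ι] [Fintype ι]
    (a : ι) (r : ι → R) : (Matrix.updateRow (1 : Matrix ι ι R) a r).det = r a := by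
  classical
  rw [Matrix.det_apply]
  rw [Finset.sum_eq_single_of_mem (1 : Equiv.Perm ι) (Finset.mem_univ _)]
  · simp only [Equiv.Perm.sign_one, one_smul, Equiv.Perm.one_apply]
    rw [Finset.prod_eq_single_of_mem a (Finset.mem_univ a)]
    · simp [Matrix.updateRow_self]
    · intro i _ hia
      rw [Matrix.updateRow_ne hia, Matrix.one_apply_eq]
  · intro σ _ hσ
    obtain ⟨j, hj⟩ : ∃ j, σ j ≠ j := by
      by_contra h; push_neg at h; exact hσ (Equiv.ext h)
    have hex : ∃ i, σ i ≠ i ∧ σ i ≠ a := by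
      by_cases hja : σ j = a
      · have haa : σ a ≠ a := by
          intro h
          have hj2 : j = a := Equiv.injective σ (by rw [hja, h])
          rw [hj2] at hj; exact hj h
        exact ⟨a, haa, haa⟩
      · exact ⟨j, hj, hja⟩
    obtain ⟨i, hi, hia⟩ := hex
    rw [Finset.prod_eq_zero (Finset.mem_univ i)]
    · exact smul_zero _
    · rw [Matrix.updateRow_ne hia, Matrix.one_apply_ne hi]

lemma sgm_eps_ne (a c : Fin n) (h : c ≠ a) : sgm D a (eps c) = eps c := by
  funext d
  simp [sgm, eps, Pi.single_apply, Ne.symm h]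

lemma Amat_eq (a : Fin n) :
    Amat D a = Matrix.updateRow 1 a
      (fun b => AddMonoidAlgebra.single (sgm D a (eps a) - eps b) ((sgm D a (eps a)) b)) := by
  apply Matrix.ext
  intro c b
  by_cases h : c = a
  · subst h; simp [Matrix.updateRow_self, Amat]
  · rw [Matrix.updateRow_ne h]
    show AddMonoidAlgebra.single (sgm D a (eps c) - eps b) ((sgm D a (eps c)) b) = _
    rw [sgm_eps_ne D a c h]
    by_cases hcb : c = b
    · subst hcb
      rw [Matrix.one_apply_eq]
      have h1 : eps c - eps c = (0 : Fin n → ℤ) := sub_self _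
      have h2 : (eps c) c = 1 := by simp [eps]
      rw [h1, h2, AddMonoidAlgebra.one_def]
    · rw [Matrix.one_apply_ne hcb]
      have h2 : (eps c) b = 0 := by simp [eps, Pi.single_apply, Ne.symm hcb]
      rw [h2]
      exact AddMonoidAlgebra.single_zero _

/-- `α_a` in the exponent lattice (weight coordinates). -/
def acol (a : Fin n) : Fin n → ℤ := fun b => D.C b a

lemma det_Amat (a : Fin n) : (Amat D a).det = - AddMonoidAlgebra.single (-(acol D a)) 1 := by
  rw [Amat_eq, det_updateRow_one]
  have h1 : sgm D a (eps a) - eps a = -(acol D a) := by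
    funext b
    simp [sgm, eps, acol, Pi.single_apply]
  have h2 : (sgm D a (eps a)) a = -1 := by
    simp [sgm, eps, D.diag, Pi.single_apply]
  rw [h1, h2]
  show AddMonoidAlgebra.single _ _ = _
  have hneg : (-1 : ℤ) = -(1 : ℤ) := by norm_num
  rw [hneg, AddMonoidAlgebra.single_neg]

lemma reflW_det (Q : Fin n → LaurentA n) (hinv : ∀ a b, reflW D a (Q b) = Q b) (a : Fin n) :
    reflW D a ((Matrix.of fun a b => pder b (Q a)).det)
      = - AddMonoidAlgebra.single (acol D a) 1 * (Matrix.of fun a b => pder b (Q a)).det := by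
  set M := (Matrix.of fun a b => pder b (Q a)) with hM
  have key : M = ((reflWHom D a).mapMatrix M) * Amat D a := by
    apply Matrix.ext
    intro x b
    rw [Matrix.mul_apply]
    have h0 : M x b = pder b (reflW D a (Q x)) := by rw [hinv]; rfl
    rw [h0, chain_rule]
    apply Finset.sum_congr rfl
    intro c _
    have h1 : (RingHom.mapMatrix (reflWHom D a) M) x c = reflW D a (pder c (Q x)) := by
      rw [RingHom.mapMatrix_apply, Matrix.map_apply, reflW_eq_hom]; rfl
    rw [h1]
    rfl
  have hdet : M.det = reflW D a M.det * (Amat D a).det := by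
    calc M.det = (((reflWHom D a).mapMatrix M) * Amat D a).det := by rw [← key]
    _ = ((reflWHom D a).mapMatrix M).det * (Amat D a).det := Matrix.det_mul _ _
    _ = reflW D a M.det * (Amat D a).det := by rw [← RingHom.map_det, ← reflW_eq_hom]
  rw [det_Amat] at hdet
  have h3 : - AddMonoidAlgebra.single (acol D a) 1 * M.det
      = reflW D a M.det * (AddMonoidAlgebra.single (acol D a) 1
          * AddMonoidAlgebra.single (-(acol D a)) 1) := by
    conv_lhs => rw [hdet]
    ring
  rw [AddMonoidAlgebra.single_mul_single, add_neg_cancel, mul_one,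
      ← AddMonoidAlgebra.one_def, mul_one] at h3
  rw [h3]

end Statement17Aux2


section Statement17Aux3

open AddMonoidAlgebra

variable {n : ℕ} (D : CartanDatum n)

/-- `C` acting on integer vectors: root coordinates to weight coordinates. -/
def Cmul (v : Fin n → ℤ) : Fin n → ℤ := fun b => ∑ c, D.C b c * v c

/-- The positive root cone `Q₊` in the exponent lattice. -/
def Qplus : Set (Fin n → ℤ) := {v | ∃ u : Fin n → ℕ, v = Cmul D fun c => (u c : ℤ)}

lemma Qplus_zero : (0 : Fin n → ℤ) ∈ Qplus D := by
  refine ⟨0, ?_⟩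
  funext b
  simp [Cmul]

lemma Qplus_add {v w : Fin n → ℤ} (hv : v ∈ Qplus D) (hw : w ∈ Qplus D) :
    v + w ∈ Qplus D := by
  obtain ⟨u, hu⟩ := hv
  obtain ⟨u', hu'⟩ := hw
  refine ⟨u + u', ?_⟩
  funext b
  simp only [hu, hu', Pi.add_apply, Cmul, Nat.cast_add, ← Finset.sum_add_distrib]
  apply Finset.sum_congr rfl
  intro c _
  push_cast
  ring

lemma cmulQ_inj (c : Fin n → ℚ) (h : ∀ b, ∑ a, (D.C b a : ℚ) * c a = 0) : c = 0 := by
  by_contra hc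
  have hpos := D.posdef c hc
  have h0 : ∑ a, ∑ b, c a * ((D.C a b : ℚ) / (D.t a : ℚ)) * c b = 0 := by
    apply Finset.sum_eq_zero
    intro a _
    have he : ∀ b ∈ Finset.univ, c a * ((D.C a b : ℚ) / (D.t a : ℚ)) * c b
        = (c a / (D.t a : ℚ)) * ((D.C a b : ℚ) * c b) := by
      intro b _; ring
    rw [Finset.sum_congr rfl he, ← Finset.mul_sum, h a, mul_zero]
  rw [h0] at hpos
  exact lt_irrefl 0 hpos

lemma Qplus_pointed {v : Fin n → ℤ} (hv : v ∈ Qplus D) (hv' : -v ∈ Qplus D) : v = 0 := by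
  obtain ⟨u, hu⟩ := hv
  obtain ⟨u', hu'⟩ := hv'
  have hz : ∀ b, ∑ a, (D.C b a : ℚ) * ((u a : ℚ) + (u' a : ℚ)) = 0 := by
    intro b
    have h2 : ((∑ c, D.C b c * (u c : ℤ)) + ∑ c, D.C b c * (u' c : ℤ) : ℤ) = 0 := by
      have := congrFun hu b
      have := congrFun hu' b
      show Cmul D (fun c => (u c : ℤ)) b + Cmul D (fun c => (u' c : ℤ)) b = 0
      rw [← congrFun hu b, ← congrFun hu' b]
      simp
    have h3 := congrArg (fun z : ℤ => (z : ℚ)) h2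
    push_cast at h3
    calc ∑ a, (D.C b a : ℚ) * ((u a : ℚ) + (u' a : ℚ))
        = (∑ a, (D.C b a : ℚ) * (u a : ℚ)) + ∑ a, (D.C b a : ℚ) * (u' a : ℚ) := by
          rw [← Finset.sum_add_distrib]
          apply Finset.sum_congr rfl
          intro a _
          ring
      _ = 0 := h3
  have hq0 := cmulQ_inj D _ hz
  have hzero : ∀ a, (u a : ℚ) + (u' a : ℚ) = 0 := fun a => congrFun hq0 a
  have hu0 : ∀ a, (u a : ℤ) = 0 := by
    intro a
    have h5 : (0:ℚ) ≤ (u a : ℚ) := Nat.cast_nonneg _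
    have h6 : (0:ℚ) ≤ (u' a : ℚ) := Nat.cast_nonneg _
    have h7 : (u a : ℚ) = 0 := by linarith [hzero a]
    exact_mod_cast h7
  funext b
  rw [hu]
  show (∑ c, D.C b c * (u c : ℤ)) = 0
  apply Finset.sum_eq_zero
  intro c _
  rw [hu0 c, mul_zero]

/-- Support of a product, with leading coefficient, over a cone. -/
lemma prod_supp_coeff {ι : Type*} [DecidableEq ι] (s : Finset ι) (F : ι → LaurentA n)
    (d : ι → Fin n → ℤ)
    (hF : ∀ i ∈ s, ∀ v ∈ (F i).coeff.support, d i - v ∈ Qplus D) :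
    (∀ v ∈ (∏ i ∈ s, F i).coeff.support, (∑ i ∈ s, d i) - v ∈ Qplus D)
    ∧ (∏ i ∈ s, F i) (∑ i ∈ s, d i) = ∏ i ∈ s, (F i) (d i) := by
  classical
  induction s using Finset.induction with
  | empty =>
    constructor
    · intro v hv
      rw [Finset.prod_empty, AddMonoidAlgebra.one_def] at hv
      have hv0 : v = 0 := Finset.mem_singleton.mp (Finsupp.support_single_subset hv)
      rw [Finset.sum_empty, hv0, sub_zero]
      exact Qplus_zero D
    · rw [Finset.prod_empty, Finset.sum_empty, AddMonoidAlgebra.one_def]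
      simp
  | @insert i s0 hi ih =>
    have hF' : ∀ j ∈ s0, ∀ v ∈ (F j).coeff.support, d j - v ∈ Qplus D := fun j hj =>
      hF j (Finset.mem_insert_of_mem hj)
    obtain ⟨ihs, ihc⟩ := ih hF'
    rw [Finset.prod_insert hi, Finset.sum_insert hi]
    have hsupp1 : ∀ v ∈ (F i * ∏ j ∈ s0, F j).coeff.support,
        (d i + ∑ j ∈ s0, d j) - v ∈ Qplus D := by
      intro v hv
      have hmem := AddMonoidAlgebra.support_coeff_mul_subset (F i) (∏ j ∈ s0, F j) hv
      rw [Finset.mem_add] at hmem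
      obtain ⟨x, hx, y, hy, hxy⟩ := hmem
      have q1 := hF i (Finset.mem_insert_self i s0) x hx
      have q2 := ihs y hy
      have hrw : (d i + ∑ j ∈ s0, d j) - v = (d i - x) + ((∑ j ∈ s0, d j) - y) := by
        rw [← hxy]; abel
      rw [hrw]
      exact Qplus_add D q1 q2
    refine ⟨hsupp1, ?_⟩
    set f' : LaurentA n := F i - AddMonoidAlgebra.single (d i) ((F i) (d i)) with hf'
    have hf'supp : ∀ x, f' x ≠ 0 → x ≠ d i ∧ x ∈ (F i).coeff.support := by
      intro x hx
      by_cases hxd : x = d i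
      · exfalso
        apply hx
        rw [hxd, hf', AddMonoidAlgebra.coeff_sub, Finsupp.sub_apply]
        have : (AddMonoidAlgebra.single (d i) ((F i) (d i))) (d i) = (F i) (d i) :=
          Finsupp.single_eq_same
        rw [this, sub_self]
      · constructor
        · exact hxd
        · rw [Finsupp.mem_support_iff]
          intro h0
          apply hx
          rw [hf', AddMonoidAlgebra.coeff_sub, Finsupp.sub_apply, h0]
          have : (AddMonoidAlgebra.single (d i) ((F i) (d i))) x = 0 :=
            Finsupp.single_eq_of_ne (fun h => hxd h)
          rw [this, sub_self]
    have hsplit : F i = AddMonoidAlgebra.single (d i) ((F i) (d i)) + f' := by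
      rw [hf']; ring
    have hzero : (f' * ∏ j ∈ s0, F j) (d i + ∑ j ∈ s0, d j) = 0 := by
      by_contra hne
      have hv : (d i + ∑ j ∈ s0, d j) ∈ (f' * ∏ j ∈ s0, F j).coeff.support :=
        Finsupp.mem_support_iff.mpr hne
      have hmem := AddMonoidAlgebra.support_coeff_mul_subset _ _ hv
      rw [Finset.mem_add] at hmem
      obtain ⟨x, hx, y, hy, hxy⟩ := hmem
      obtain ⟨hx1, hx2⟩ := hf'supp x (Finsupp.mem_support_iff.mp hx)
      have hxQ : d i - x ∈ Qplus D := hF i (Finset.mem_insert_self i s0) x hx2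
      have hyQ := ihs y hy
      have hyv : y = d i + (∑ j ∈ s0, d j) - x := by rw [← hxy]; abel
      have hsum : (∑ j ∈ s0, d j) - y = -(d i - x) := by rw [hyv]; abel
      have h1 : d i - x = 0 := Qplus_pointed D hxQ (hsum ▸ hyQ)
      exact hx1 (sub_eq_zero.mp h1).symm
    calc (F i * ∏ j ∈ s0, F j) (d i + ∑ j ∈ s0, d j)
        = ((AddMonoidAlgebra.single (d i) ((F i) (d i)) + f')
            * ∏ j ∈ s0, F j) (d i + ∑ j ∈ s0, d j) := by rw [← hsplit]
      _ = (AddMonoidAlgebra.single (d i) ((F i) (d i)) * ∏ j ∈ s0, F j)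
            (d i + ∑ j ∈ s0, d j) := by
          rw [add_mul, AddMonoidAlgebra.coeff_add, Finsupp.add_apply, hzero, add_zero]
      _ = (F i) (d i) * (∏ j ∈ s0, F j) (-(d i) + (d i + ∑ j ∈ s0, d j)) :=
          AddMonoidAlgebra.coeff_single_mul_apply _ _ _ _
      _ = (F i) (d i) * (∏ j ∈ s0, F j) (∑ j ∈ s0, d j) := by
          have harg : -(d i) + (d i + ∑ j ∈ s0, d j) = ∑ j ∈ s0, d j := by abel
          rw [harg]
      _ = (F i) (d i) * ∏ j ∈ s0, (F j) (d j) := by rw [ihc]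
      _ = ∏ j ∈ insert i s0, (F j) (d j) := by rw [Finset.prod_insert hi]

end Statement17Aux3

section Statement17Aux4

open AddMonoidAlgebra

variable {n : ℕ} (D : CartanDatum n)

lemma entry_supp (Q : Fin n → LaurentA n)
    (hsupp : ∀ a : Fin n, ∀ μ ∈ (Q a).coeff.support, μ ≠ Pi.single a (1 : ℤ) →
      ∃ u : Fin n → ℕ, ∀ b, (Pi.single a 1 : Fin n → ℤ) b - μ b = ∑ c, D.C b c * (u c : ℤ))
    (a b : Fin n) :
    ∀ v ∈ (pder b (Q a)).coeff.support, (eps a - eps b) - v ∈ Qplus D := by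
  intro v hv
  have h1 : Q a (v + eps b) ≠ 0 := by
    intro h0
    rw [Finsupp.mem_support_iff, pder_coeff, h0, zero_mul] at hv
    exact hv rfl
  have hμ : (v + eps b) ∈ (Q a).coeff.support := Finsupp.mem_support_iff.mpr h1
  by_cases hc : v + eps b = Pi.single a (1:ℤ)
  · have hc' : eps a = v + eps b := hc.symm
    have h2 : (eps a - eps b) - v = 0 := by rw [hc']; abel
    rw [h2]
    exact Qplus_zero D
  · obtain ⟨u, hu⟩ := hsupp a _ hμ hc
    refine ⟨u, ?_⟩
    funext b'
    have h3 := hu b'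
    show eps a b' - eps b b' - v b' = ∑ c, D.C b' c * (u c : ℤ)
    rw [← h3]
    show eps a b' - eps b b' - v b' = eps a b' - (v b' + eps b b')
    ring

lemma det_prod_coeff (Q : Fin n → LaurentA n)
    (hlead : ∀ a : Fin n, Q a (Pi.single a (1 : ℤ)) = 1)
    (hsupp : ∀ a : Fin n, ∀ μ ∈ (Q a).coeff.support, μ ≠ Pi.single a (1 : ℤ) →
      ∃ u : Fin n → ℕ, ∀ b, (Pi.single a 1 : Fin n → ℤ) b - μ b = ∑ c, D.C b c * (u c : ℤ))
    (σ : Equiv.Perm (Fin n)) :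
    (∏ i, pder i (Q (σ i))) 0 = ∏ i, ((eps (σ i)) i : ℤ) := by
  classical
  have hF : ∀ i ∈ Finset.univ, ∀ v ∈ (pder i (Q (σ i))).coeff.support,
      (fun j => eps (σ j) - eps j) i - v ∈ Qplus D := by
    intro i _
    exact entry_supp D Q hsupp (σ i) i
  have h2 := (prod_supp_coeff D Finset.univ (fun i => pder i (Q (σ i)))
      (fun j => eps (σ j) - eps j) hF).2
  have hd0 : (∑ i, (eps (σ i) - eps i)) = (0 : Fin n → ℤ) := by
    rw [Finset.sum_sub_distrib, Equiv.sum_comp σ eps, sub_self]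
  rw [hd0] at h2
  rw [h2]
  apply Finset.prod_congr rfl
  intro i _
  rw [pder_coeff]
  have harg : eps (σ i) - eps i + eps i = eps (σ i) := by abel
  rw [harg]
  have hl : Q (σ i) (eps (σ i)) = 1 := hlead (σ i)
  rw [hl, one_mul]

lemma det_supp (Q : Fin n → LaurentA n)
    (hsupp : ∀ a : Fin n, ∀ μ ∈ (Q a).coeff.support, μ ≠ Pi.single a (1 : ℤ) →
      ∃ u : Fin n → ℕ, ∀ b, (Pi.single a 1 : Fin n → ℤ) b - μ b = ∑ c, D.C b c * (u c : ℤ)) :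
    ∀ v ∈ ((Matrix.of fun a b => pder b (Q a)).det).coeff.support, -v ∈ Qplus D := by
  classical
  intro v hv
  rw [Finsupp.mem_support_iff, Matrix.det_apply] at hv
  have hv2 : ∃ σ : Equiv.Perm (Fin n),
      ((Equiv.Perm.sign σ) • ∏ i, (Matrix.of fun a b => pder b (Q a)) (σ i) i) v ≠ 0 := by
    by_contra hall
    push_neg at hall
    apply hv
    rw [AddMonoidAlgebra.coeff_sum, Finsupp.finset_sum_apply]
    exact Finset.sum_eq_zero fun σ _ => hall σ
  obtain ⟨σ, hσ⟩ := hv2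
  rw [AddMonoidAlgebra.coeff_smul_apply] at hσ
  have hP : (∏ i, pder i (Q (σ i))) v ≠ 0 := by
    intro h0
    apply hσ
    have he : (∏ i, (Matrix.of fun a b => pder b (Q a)) (σ i) i) v
        = (∏ i, pder i (Q (σ i))) v := rfl
    rw [he, h0, smul_zero]
  have hF : ∀ i ∈ Finset.univ, ∀ w ∈ (pder i (Q (σ i))).coeff.support,
      (fun j => eps (σ j) - eps j) i - w ∈ Qplus D := by
    intro i _
    exact entry_supp D Q hsupp (σ i) i
  have h1 := (prod_supp_coeff D Finset.univ (fun i => pder i (Q (σ i)))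
      (fun j => eps (σ j) - eps j) hF).1 v (Finsupp.mem_support_iff.mpr hP)
  have hd0 : (∑ i, (eps (σ i) - eps i)) = (0 : Fin n → ℤ) := by
    rw [Finset.sum_sub_distrib, Equiv.sum_comp σ eps, sub_self]
  rw [hd0, zero_sub] at h1
  exact h1

lemma det_coeff_zero (Q : Fin n → LaurentA n)
    (hlead : ∀ a : Fin n, Q a (Pi.single a (1 : ℤ)) = 1)
    (hsupp : ∀ a : Fin n, ∀ μ ∈ (Q a).coeff.support, μ ≠ Pi.single a (1 : ℤ) →
      ∃ u : Fin n → ℕ, ∀ b, (Pi.single a 1 : Fin n → ℤ) b - μ b = ∑ c, D.C b c * (u c : ℤ)) :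
    ((Matrix.of fun a b => pder b (Q a)).det) 0 = 1 := by
  classical
  rw [Matrix.det_apply, AddMonoidAlgebra.coeff_sum, Finsupp.finset_sum_apply]
  rw [Finset.sum_eq_single_of_mem (1 : Equiv.Perm (Fin n)) (Finset.mem_univ _)]
  · rw [AddMonoidAlgebra.coeff_smul_apply]
    have he : (∏ i, (Matrix.of fun a b => pder b (Q a)) ((1 : Equiv.Perm (Fin n)) i) i) 0
        = (∏ i, pder i (Q i)) 0 := rfl
    rw [he]
    have h2 : (∏ i, pder i (Q ((1 : Equiv.Perm (Fin n)) i))) 0 = ∏ i, ((eps i) i : ℤ) :=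
      det_prod_coeff D Q hlead hsupp 1
    have he2 : (∏ i : Fin n, pder i (Q ((1 : Equiv.Perm (Fin n)) i))) 0
        = (∏ i, pder i (Q i)) 0 := rfl
    rw [he2] at h2
    rw [h2]
    have h3 : ∀ i : Fin n, ((eps i) i : ℤ) = 1 := by
      intro i; simp [eps]
    rw [Finset.prod_congr rfl fun i _ => h3 i, Finset.prod_const_one]
    simp
  · intro σ _ hσ
    obtain ⟨i, hi⟩ : ∃ i, σ i ≠ i := by
      by_contra h; push_neg at h; exact hσ (Equiv.ext h)
    rw [AddMonoidAlgebra.coeff_smul_apply]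
    have he : (∏ i, (Matrix.of fun a b => pder b (Q a)) (σ i) i) 0
        = (∏ i, pder i (Q (σ i))) 0 := rfl
    rw [he, det_prod_coeff D Q hlead hsupp σ]
    rw [Finset.prod_eq_zero (Finset.mem_univ i), smul_zero]
    simp [eps, Pi.single_apply, hi]

end Statement17Aux4

section Statement17Aux5

open AddMonoidAlgebra

variable {n : ℕ} (D : CartanDatum n)

/-- `ρ` in the exponent lattice. -/
def rhoZ : Fin n → ℤ := fun _ => 1

/-- Simple reflection in root coordinates. -/
def rstep (a : Fin n) (u : Fin n → ℤ) : Fin n → ℤ :=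
  fun c => u c - (if c = a then (∑ b, D.C a b * u b) else 0)

/-- Word of simple reflections in root coordinates. -/
def rword (l : List (Fin n)) (u : Fin n → ℤ) : Fin n → ℤ := l.foldr (rstep D) u

/-- Word of simple reflections in weight coordinates. -/
def wword (l : List (Fin n)) (v : Fin n → ℤ) : Fin n → ℤ := l.foldr (sgm D) v

@[simp] lemma rword_nil (u : Fin n → ℤ) : rword D List.nil u = u := rfl
@[simp] lemma wword_nil (v : Fin n → ℤ) : wword D List.nil v = v := rfl
lemma rword_cons (a : Fin n) (l : List (Fin n)) (u : Fin n → ℤ) :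
    rword D (a :: l) u = rstep D a (rword D l u) := rfl
lemma wword_cons (a : Fin n) (l : List (Fin n)) (v : Fin n → ℤ) :
    wword D (a :: l) v = sgm D a (wword D l v) := rfl
lemma rword_append (l₁ l₂ : List (Fin n)) (u : Fin n → ℤ) :
    rword D (l₁ ++ l₂) u = rword D l₁ (rword D l₂ u) := List.foldr_append
lemma wword_append (l₁ l₂ : List (Fin n)) (v : Fin n → ℤ) :
    wword D (l₁ ++ l₂) v = wword D l₁ (wword D l₂ v) := List.foldr_append

lemma sum_ite_Ca (a b : Fin n) (m : ℤ) :
    (∑ c, D.C b c * (if c = a then m else 0) : ℤ) = D.C b a * m := by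
  classical
  rw [Finset.sum_eq_single a]
  · rw [if_pos rfl]
  · intro c _ hc
    rw [if_neg hc, mul_zero]
  · intro h
    exact absurd (Finset.mem_univ a) h

lemma rstep_rstep (a : Fin n) (u : Fin n → ℤ) : rstep D a (rstep D a u) = u := by
  have hm : (∑ b, D.C a b * (rstep D a u b)) = - ∑ b, D.C a b * u b := by
    simp only [rstep]
    rw [Finset.sum_congr rfl (fun b _ => mul_sub (D.C a b) _ _), Finset.sum_sub_distrib]
    have h1 : (∑ c, D.C a c * (if c = a then (∑ b, D.C a b * u b) else 0) : ℤ)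
        = D.C a a * ∑ b, D.C a b * u b := by
      classical
      rw [Finset.sum_eq_single a]
      · rw [if_pos rfl]
      · intro c _ hc
        rw [if_neg hc, mul_zero]
      · intro h
        exact absurd (Finset.mem_univ a) h
    rw [h1, D.diag]
    ring
  funext c
  simp only [rstep, hm]
  by_cases hc : c = a
  · rw [if_pos hc, if_pos hc]
    have harg : ∑ b, D.C a b * (u b - (if b = a then (∑ b', D.C a b' * u b') else 0))
        = - ∑ b, D.C a b * u b := by
      simp only [rstep] at hm
      exact hm
    rw [harg]
    ring
  · rw [if_neg hc, if_neg hc]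
    ring

lemma rword_rev (l : List (Fin n)) (u : Fin n → ℤ) :
    rword D l.reverse (rword D l u) = u := by
  induction l generalizing u with
  | nil => rfl
  | cons a l ih =>
    rw [List.reverse_cons, rword_cons, rword_append]
    show rword D l.reverse (rword D (a :: List.nil) (rstep D a (rword D l u))) = u
    have h1 : rword D (a :: List.nil) (rstep D a (rword D l u)) = rword D l u := by
      show rstep D a (rstep D a (rword D l u)) = rword D l u
      exact rstep_rstep D a _
    rw [h1]
    exact ih u

lemma sgm_smul (a : Fin n) (k : ℤ) (z : Fin n → ℤ) :
    sgm D a (k • z) = k • sgm D a z := by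
  funext b
  simp only [sgm, Pi.smul_apply, smul_eq_mul]
  ring

lemma wword_rev (l : List (Fin n)) (v : Fin n → ℤ) :
    wword D l.reverse (wword D l v) = v := by
  induction l generalizing v with
  | nil => rfl
  | cons a l ih =>
    rw [List.reverse_cons, wword_cons, wword_append]
    have h1 : wword D (a :: List.nil) (sgm D a (wword D l v)) = wword D l v := by
      show sgm D a (sgm D a (wword D l v)) = wword D l v
      exact sgm_sgm D a _
    rw [h1]
    exact ih v

lemma wword_rev' (l : List (Fin n)) (v : Fin n → ℤ) :
    wword D l (wword D l.reverse v) = v := by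
  have := wword_rev D l.reverse v
  rw [List.reverse_reverse] at this
  exact this

lemma wword_sub_smul (l : List (Fin n)) (x z : Fin n → ℤ) (k : ℤ) :
    wword D l (x - k • z) = wword D l x - k • wword D l z := by
  induction l with
  | nil => rfl
  | cons a l ih =>
    rw [wword_cons, wword_cons, wword_cons, ih]
    rw [sgm_sub, sgm_smul]

lemma Cmul_rstep (a : Fin n) (u : Fin n → ℤ) :
    Cmul D (rstep D a u) = sgm D a (Cmul D u) := by
  funext b
  simp only [Cmul, rstep, sgm]
  rw [Finset.sum_congr rfl (fun c _ => mul_sub (D.C b c) _ _), Finset.sum_sub_distrib]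
  rw [sum_ite_Ca]
  ring

lemma wword_Cmul (l : List (Fin n)) (u : Fin n → ℤ) :
    wword D l (Cmul D u) = Cmul D (rword D l u) := by
  induction l with
  | nil => rfl
  | cons a l ih =>
    rw [wword_cons, rword_cons, ih, Cmul_rstep]

lemma acol_eq_Cmul_eps (c : Fin n) : acol D c = Cmul D (eps c) := by
  funext b
  simp only [acol, Cmul, eps]
  classical
  rw [Finset.sum_eq_single c]
  · simp
  · intro d _ hd
    simp [Pi.single_apply, hd]
  · intro h
    exact absurd (Finset.mem_univ c) h

/-- The conjugated reflection at the root `rword l (eps c)`, acting on weights. -/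
lemma conj_formula (l : List (Fin n)) (c : Fin n) (v : Fin n → ℤ) :
    wword D (l ++ c :: l.reverse) v
      = v - ((wword D l.reverse v) c) • Cmul D (rword D l (eps c)) := by
  rw [wword_append]
  rw [show (c :: l.reverse) = (c :: List.nil) ++ l.reverse from rfl, wword_append]
  set y := wword D l.reverse v with hy
  have h1 : wword D (c :: List.nil) y = y - (y c) • acol D c := by
    show sgm D c y = _
    funext b
    simp only [sgm, acol, Pi.sub_apply, Pi.smul_apply, smul_eq_mul]
  rw [h1, wword_sub_smul, hy, wword_rev']
  rw [acol_eq_Cmul_eps, wword_Cmul]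

end Statement17Aux5

section Statement17Aux6

open AddMonoidAlgebra

variable {n : ℕ} (D : CartanDatum n)

/-- The pairing `(μ | β)` between weight and root coordinates. -/
def pairf (v u : Fin n → ℤ) : ℚ := ∑ a, (v a : ℚ) * (u a : ℚ) / (D.t a : ℚ)

lemma tQ_ne (a : Fin n) : (D.t a : ℚ) ≠ 0 :=
  Nat.cast_ne_zero.mpr (Nat.pos_iff_ne_zero.mp (D.t_pos a))

lemma tQ_pos (a : Fin n) : (0 : ℚ) < (D.t a : ℚ) := by
  exact_mod_cast D.t_pos a

lemma symmQ (a b : Fin n) : (D.C b a : ℚ) / (D.t b : ℚ) = (D.C a b : ℚ) / (D.t a : ℚ) := by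
  have h := D.symm a b
  have h' := congrArg (fun z : ℤ => (z : ℚ)) h
  push_cast at h'
  rw [div_eq_div_iff (tQ_ne D b) (tQ_ne D a)]
  linarith [h']

lemma pairf_step (a : Fin n) (v u : Fin n → ℤ) :
    pairf D (sgm D a v) (rstep D a u) = pairf D v u := by
  classical
  set m : ℤ := ∑ b, D.C a b * u b with hm
  have hmq : (m : ℚ) = ∑ x, (D.C a x : ℚ) * (u x : ℚ) := by
    rw [hm]; push_cast; rfl
  have hterm : ∀ b : Fin n, ((sgm D a v b : ℤ) : ℚ) * ((rstep D a u b : ℤ) : ℚ) / (D.t b : ℚ)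
      = (v b : ℚ) * (u b : ℚ) / (D.t b : ℚ)
        - (v a : ℚ) * (((D.C b a : ℚ) / (D.t b : ℚ)) * (u b : ℚ))
        - (if b = a then (((v b : ℚ) - (v a : ℚ) * (D.C b a : ℚ)) * (m : ℚ) / (D.t b : ℚ)) else 0) := by
    intro b
    have ht := tQ_ne D b
    simp only [sgm, rstep]
    by_cases hb : b = a
    · rw [if_pos hb, if_pos hb]
      push_cast
      field_simp
      rw [hmq]
    · rw [if_neg hb, if_neg hb]
      push_cast
      field_simp
      ring
  show (∑ b, ((sgm D a v b : ℤ) : ℚ) * ((rstep D a u b : ℤ) : ℚ) / (D.t b : ℚ)) = pairf D v u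
  rw [Finset.sum_congr rfl (fun b _ => hterm b)]
  rw [Finset.sum_sub_distrib, Finset.sum_sub_distrib]
  have h2 : (∑ b, (v a : ℚ) * (((D.C b a : ℚ) / (D.t b : ℚ)) * (u b : ℚ)))
      = (v a : ℚ) * ((m : ℚ) / (D.t a : ℚ)) := by
    rw [Finset.sum_congr rfl (fun b _ => by rw [symmQ D a b])]
    have h3 : ∀ b ∈ Finset.univ, (v a : ℚ) * (((D.C a b : ℚ) / (D.t a : ℚ)) * (u b : ℚ))
        = ((v a : ℚ) / (D.t a : ℚ)) * ((D.C a b : ℚ) * (u b : ℚ)) := by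
      intro b _; ring
    rw [Finset.sum_congr rfl h3, ← Finset.mul_sum]
    have h4 : (∑ b, (D.C a b : ℚ) * (u b : ℚ)) = (m : ℚ) := by
      rw [hm]; push_cast; rfl
    rw [h4]; ring
  have h5 : (∑ b, if b = a then (((v b : ℚ) - (v a : ℚ) * (D.C b a : ℚ)) * (m : ℚ) / (D.t b : ℚ)) else 0)
      = - ((v a : ℚ) * ((m : ℚ) / (D.t a : ℚ))) := by
    rw [Finset.sum_ite_eq' Finset.univ a]
    rw [if_pos (Finset.mem_univ a)]
    have hd := D.diag a
    have hd' : (D.C a a : ℚ) = 2 := by exact_mod_cast hd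
    rw [hd']
    field_simp
    ring
  rw [h2, h5]
  show pairf D v u - _ - _ = pairf D v u
  ring

lemma pairf_word (l : List (Fin n)) (v u : Fin n → ℤ) :
    pairf D (wword D l v) (rword D l u) = pairf D v u := by
  induction l with
  | nil => rfl
  | cons a l ih =>
    rw [wword_cons, rword_cons, pairf_step, ih]

lemma pairf_eps (v : Fin n → ℤ) (c : Fin n) :
    pairf D v (eps c) = (v c : ℚ) / (D.t c : ℚ) := by
  classical
  show (∑ a, (v a : ℚ) * ((eps c a : ℤ) : ℚ) / (D.t a : ℚ)) = _
  rw [Finset.sum_eq_single c]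
  · simp [eps]
  · intro b _ hb
    simp [eps, Pi.single_apply, hb]
  · intro h
    exact absurd (Finset.mem_univ c) h

lemma wword_rev_coord (l : List (Fin n)) (c : Fin n) (v : Fin n → ℤ) :
    ((wword D l.reverse v) c : ℚ) = (D.t c : ℚ) * pairf D v (rword D l (eps c)) := by
  have h := pairf_word D l (wword D l.reverse v) (eps c)
  rw [wword_rev'] at h
  rw [h, pairf_eps]
  rw [mul_div_cancel₀]
  exact tQ_ne D c

lemma sign_word (F : LaurentA n) (hrel : ∀ (a : Fin n) (v : Fin n → ℤ), F (sgm D a v) = - F v)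
    (l : List (Fin n)) (v : Fin n → ℤ) :
    F (wword D l v) = (-1)^(l.length) * F v := by
  induction l with
  | nil => simp
  | cons a l ih =>
    rw [wword_cons, hrel, ih, List.length_cons, pow_succ]
    ring

end Statement17Aux6

section Statement17Aux7

open AddMonoidAlgebra

variable {n : ℕ} (D : CartanDatum n)

/-- The roots, in root coordinates. -/
def URoot : Set (Fin n → ℤ) := {u | ∃ l : List (Fin n), ∃ c : Fin n, u = rword D l (eps c)}

lemma URoot_eps (c : Fin n) : eps c ∈ URoot D := ⟨List.nil, c, rfl⟩

lemma URoot_rstep (a : Fin n) {u : Fin n → ℤ} (hu : u ∈ URoot D) :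
    rstep D a u ∈ URoot D := by
  obtain ⟨l, c, rfl⟩ := hu
  exact ⟨a :: l, c, rfl⟩

lemma sum_C_eps (a c : Fin n) : (∑ b, D.C a b * (eps c b)) = D.C a c := by
  classical
  rw [Finset.sum_eq_single c]
  · simp [eps]
  · intro b _ hb
    simp [eps, Pi.single_apply, hb]
  · intro h
    exact absurd (Finset.mem_univ c) h

lemma rstep_eps_self (c : Fin n) : rstep D c (eps c) = -eps c := by
  funext d
  simp only [rstep, sum_C_eps, D.diag, Pi.neg_apply]
  by_cases hd : d = c
  · subst hd
    rw [if_pos rfl]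
    simp [eps]
  · rw [if_neg hd]
    simp [eps, Pi.single_apply, hd]

lemma URoot_neg {u : Fin n → ℤ} (hu : u ∈ URoot D) : -u ∈ URoot D := by
  obtain ⟨l, c, rfl⟩ := hu
  refine ⟨l ++ (c :: List.nil), c, ?_⟩
  rw [rword_append]
  have h1 : rword D (c :: List.nil) (eps c) = -eps c := rstep_eps_self D c
  rw [h1]
  -- rword l (-eps c) = - rword l (eps c)
  have h2 : ∀ (l' : List (Fin n)) (x : Fin n → ℤ), rword D l' (-x) = - rword D l' x := by
    intro l'
    induction l' with
    | nil => intro x; rfl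
    | cons a l' ih =>
      intro x
      rw [rword_cons, rword_cons, ih]
      funext d
      simp only [rstep, Pi.neg_apply]
      by_cases hd : d = a
      · rw [if_pos hd, if_pos hd]
        simp only [mul_neg, Finset.sum_neg_distrib]
        ring
      · rw [if_neg hd, if_neg hd]
        ring
  rw [h2]

/-- Rational version of `rstep`, for scaling arguments. -/
def rstepQ (a : Fin n) (u : Fin n → ℚ) : Fin n → ℚ :=
  fun c => u c - (if c = a then (∑ b, (D.C a b : ℚ) * u b) else 0)

def rwordQ (l : List (Fin n)) (u : Fin n → ℚ) : Fin n → ℚ := l.foldr (rstepQ D) u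

lemma rstep_cast (a : Fin n) (u : Fin n → ℤ) :
    (fun b => ((rstep D a u b : ℤ) : ℚ)) = rstepQ D a (fun b => (u b : ℚ)) := by
  funext b
  simp only [rstep, rstepQ]
  by_cases hb : b = a
  · rw [if_pos hb, if_pos hb]
    push_cast
    rfl
  · rw [if_neg hb, if_neg hb]
    push_cast
    rfl

lemma rword_cast (l : List (Fin n)) (u : Fin n → ℤ) :
    (fun b => ((rword D l u b : ℤ) : ℚ)) = rwordQ D l (fun b => (u b : ℚ)) := by
  induction l with
  | nil => rfl
  | cons a l ih =>
    show (fun b => ((rstep D a (rword D l u) b : ℤ) : ℚ)) = rstepQ D a (rwordQ D l fun b => (u b : ℚ))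
    rw [rstep_cast, ih]

lemma rstepQ_smul (a : Fin n) (q : ℚ) (x : Fin n → ℚ) :
    rstepQ D a (fun b => q * x b) = fun b => q * rstepQ D a x b := by
  funext b
  simp only [rstepQ]
  by_cases hb : b = a
  · rw [if_pos hb, if_pos hb]
    have : (∑ c, (D.C a c : ℚ) * (q * x c)) = q * ∑ c, (D.C a c : ℚ) * x c := by
      rw [Finset.mul_sum]
      apply Finset.sum_congr rfl
      intro c _
      ring
    rw [this]
    ring
  · rw [if_neg hb, if_neg hb]
    ring

lemma rwordQ_smul (l : List (Fin n)) (q : ℚ) (x : Fin n → ℚ) :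
    rwordQ D l (fun b => q * x b) = fun b => q * rwordQ D l x b := by
  induction l with
  | nil => rfl
  | cons a l ih =>
    show rstepQ D a (rwordQ D l fun b => q * x b) = _
    rw [ih, rstepQ_smul]
    rfl

lemma root_ratio_int {u : Fin n → ℤ} (hu : u ∈ URoot D) (w : Fin n → ℤ) (r : ℚ)
    (hw : ∀ b, (w b : ℚ) = r * (u b : ℚ)) : ∃ z : ℤ, (z : ℚ) = r := by
  obtain ⟨l, c, rfl⟩ := hu
  refine ⟨rword D l.reverse w c, ?_⟩
  have h1 : (fun b => ((rword D l.reverse w b : ℤ) : ℚ))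
      = rwordQ D l.reverse (fun b => (w b : ℚ)) := rword_cast D _ w
  have h2 : (fun b => (w b : ℚ))
      = fun b => r * ((rword D l (eps c) b : ℤ) : ℚ) := by
    funext b; exact hw b
  have h4 : rwordQ D l.reverse (fun b' => ((rword D l (eps c) b' : ℤ) : ℚ))
      = fun b => ((rword D l.reverse (rword D l (eps c)) b : ℤ) : ℚ) :=
    (rword_cast D _ _).symm
  have h6 : (fun b => ((rword D l.reverse w b : ℤ) : ℚ))
      = fun b => r * ((rword D l.reverse (rword D l (eps c)) b : ℤ) : ℚ) := by
    rw [h1, h2, rwordQ_smul, h4]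
  have h5 := congrFun h6 c
  rw [rword_rev] at h5
  simpa [eps] using h5

/-- Two positively proportional roots are equal. -/
lemma root_eq_of_prop {u u' : Fin n → ℤ} (hu : u ∈ URoot D) (hu' : u' ∈ URoot D)
    (q : ℚ) (hq : 0 < q) (hprop : ∀ b, (u' b : ℚ) = q * (u b : ℚ)) : u' = u := by
  obtain ⟨z, hz⟩ := root_ratio_int D hu u' q hprop
  obtain ⟨z', hz'⟩ := root_ratio_int D hu' u q⁻¹ (by
    intro b
    rw [hprop b]
    field_simp)
  have hz0 : 0 < z := by
    have : (0 : ℚ) < (z : ℚ) := by rw [hz]; exact hq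
    exact_mod_cast this
  have hz1 : (1 : ℚ) ≤ q := by
    rw [← hz]
    exact_mod_cast hz0
  have hz0' : 0 < z' := by
    have : (0 : ℚ) < (z' : ℚ) := by rw [hz']; exact inv_pos.mpr hq
    exact_mod_cast this
  have hz1' : (1 : ℚ) ≤ q⁻¹ := by
    rw [← hz']
    exact_mod_cast hz0'
  have hq1 : q ≤ 1 := by
    have h7 : q * 1 ≤ q * q⁻¹ := mul_le_mul_of_nonneg_left hz1' (le_of_lt hq)
    rw [mul_one, mul_inv_cancel₀ (ne_of_gt hq)] at h7
    exact h7
  have hqq : q = 1 := le_antisymm hq1 hz1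
  funext b
  have := hprop b
  rw [hqq, one_mul] at this
  exact_mod_cast this

end Statement17Aux7

section Statement17Aux8

open AddMonoidAlgebra

variable {n : ℕ} (D : CartanDatum n) (F : LaurentA n)

lemma pairf_neg (v u : Fin n → ℤ) : pairf D v (-u) = - pairf D v u := by
  simp only [pairf, ← Finset.sum_neg_distrib]
  apply Finset.sum_congr rfl
  intro a _
  have : ((-u) a : ℚ) = -(u a : ℚ) := by
    simp
  rw [this]
  ring

lemma pairf_zero (v : Fin n → ℤ) : pairf D v 0 = 0 := by
  simp [pairf]

lemma conj_odd_sign (hrel : ∀ (a : Fin n) (v : Fin n → ℤ), F (sgm D a v) = - F v)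
    (l : List (Fin n)) (c : Fin n) (v : Fin n → ℤ) :
    F (wword D (l ++ c :: l.reverse) v) = - F v := by
  rw [sign_word D F hrel]
  have hlen : (l ++ c :: l.reverse).length = 2 * l.length + 1 := by
    simp only [List.length_append, List.length_cons, List.length_reverse]
    omega
  rw [hlen]
  have hodd : ((-1 : ℤ))^(2 * l.length + 1) = -1 := Odd.neg_one_pow ⟨l.length, by omega⟩
  rw [hodd]
  ring

lemma root_point (hrel : ∀ (a : Fin n) (v : Fin n → ℤ), F (sgm D a v) = - F v)
    {u : Fin n → ℤ} (hu : u ∈ URoot D) :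
    ∃ (k : ℤ) (t' : ℕ), 0 < t' ∧ (k : ℚ) = (t' : ℚ) * pairf D rhoZ u
      ∧ F (rhoZ - k • Cmul D u) = - F rhoZ := by
  obtain ⟨l, c, rfl⟩ := hu
  refine ⟨(wword D l.reverse (rhoZ : Fin n → ℤ)) c, D.t c, D.t_pos c, ?_, ?_⟩
  · exact wword_rev_coord D l c rhoZ
  · have h := conj_odd_sign D F hrel l c rhoZ
    rw [conj_formula] at h
    exact h

lemma root_reg (hrel : ∀ (a : Fin n) (v : Fin n → ℤ), F (sgm D a v) = - F v)
    (hone : F rhoZ = 1) {u : Fin n → ℤ} (hu : u ∈ URoot D) : pairf D rhoZ u ≠ 0 := by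
  obtain ⟨k, t', ht', hk, hF⟩ := root_point D F hrel hu
  intro h0
  rw [h0, mul_zero] at hk
  have hk0 : k = 0 := by exact_mod_cast hk
  rw [hk0, zero_smul, sub_zero, hone] at hF
  norm_num at hF

lemma root_ne_zero (hrel : ∀ (a : Fin n) (v : Fin n → ℤ), F (sgm D a v) = - F v)
    (hone : F rhoZ = 1) {u : Fin n → ℤ} (hu : u ∈ URoot D) : u ≠ 0 := by
  intro h0
  apply root_reg D F hrel hone hu
  rw [h0]
  exact pairf_zero D rhoZ

lemma root_nonneg (hrel : ∀ (a : Fin n) (v : Fin n → ℤ), F (sgm D a v) = - F v)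
    (hone : F rhoZ = 1) (hsupp : ∀ v ∈ F.coeff.support, rhoZ - v ∈ Qplus D)
    {u : Fin n → ℤ} (hu : u ∈ URoot D) (hpos : 0 < pairf D rhoZ u) :
    ∀ b, 0 ≤ u b := by
  obtain ⟨k, t', ht', hk, hF⟩ := root_point D F hrel hu
  have hkpos : 0 < k := by
    have h1 : (0:ℚ) < (t' : ℚ) := by exact_mod_cast ht'
    have : (0:ℚ) < (k:ℚ) := by rw [hk]; exact mul_pos h1 hpos
    exact_mod_cast this
  have hFp : F (rhoZ - k • Cmul D u) ≠ 0 := by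
    rw [hF, hone]; norm_num
  have hq := hsupp _ (Finsupp.mem_support_iff.mpr hFp)
  have harg : rhoZ - (rhoZ - k • Cmul D u) = k • Cmul D u := by abel
  rw [harg] at hq
  obtain ⟨w, hw⟩ := hq
  have hz : ∀ b', ∑ a, (D.C b' a : ℚ) * ((k:ℚ) * (u a:ℚ) - (w a:ℚ)) = 0 := by
    intro b'
    have h1 := congrFun hw b'
    simp only [Pi.smul_apply, smul_eq_mul, Cmul] at h1
    have h2 := congrArg (fun z : ℤ => (z:ℚ)) h1
    push_cast at h2
    have h3 : ∑ a, (D.C b' a:ℚ) * ((k:ℚ) * (u a:ℚ) - (w a:ℚ))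
        = (k:ℚ) * (∑ a, (D.C b' a:ℚ) * (u a:ℚ)) - ∑ a, (D.C b' a:ℚ) * (w a:ℚ) := by
      rw [Finset.mul_sum, ← Finset.sum_sub_distrib]
      apply Finset.sum_congr rfl
      intro a _
      ring
    rw [h3, h2, sub_self]
  have hzz := cmulQ_inj D _ hz
  intro b
  have h4 : (k:ℚ) * (u b:ℚ) - (w b:ℚ) = 0 := by
    have := congrFun hzz b
    simpa using this
  by_contra hneg
  push_neg at hneg
  have h6 : (u b : ℚ) < 0 := by exact_mod_cast hneg
  have h7 : (0:ℚ) < (k:ℚ) := by exact_mod_cast hkpos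
  have h8 : (0:ℚ) ≤ (w b : ℚ) := Nat.cast_nonneg _
  nlinarith

lemma pairf_pos_of_nonneg (hrel : ∀ (a : Fin n) (v : Fin n → ℤ), F (sgm D a v) = - F v)
    (hone : F rhoZ = 1) {u : Fin n → ℤ} (hu : u ∈ URoot D) (hpos : ∀ b, 0 ≤ u b) :
    0 < pairf D rhoZ u := by
  have h0 : 0 ≤ pairf D rhoZ u := by
    apply Finset.sum_nonneg
    intro a _
    have h1 : (0:ℚ) ≤ (u a : ℚ) := by exact_mod_cast hpos a
    have h2 := tQ_pos D a
    have h3 : ((rhoZ : Fin n → ℤ) a : ℚ) = 1 := by simp [rhoZ]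
    rw [h3, one_mul]
    exact div_nonneg h1 (le_of_lt h2)
  exact lt_of_le_of_ne h0 (Ne.symm (root_reg D F hrel hone hu))

lemma key_step (hrel : ∀ (a : Fin n) (v : Fin n → ℤ), F (sgm D a v) = - F v)
    (hone : F rhoZ = 1) (hsupp : ∀ v ∈ F.coeff.support, rhoZ - v ∈ Qplus D)
    (a : Fin n) {u : Fin n → ℤ} (hu : u ∈ URoot D)
    (hpos : ∀ b, 0 ≤ u b) (hne : u ≠ eps a) :
    rstep D a u ∈ URoot D ∧ (∀ b, 0 ≤ rstep D a u b) ∧ rstep D a u ≠ eps a := by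
  have hmem := URoot_rstep D a hu
  refine ⟨hmem, ?_, ?_⟩
  · have hreg := root_reg D F hrel hone hmem
    rcases lt_or_gt_of_ne hreg with hlt | hgt
    · exfalso
      have hmem' := URoot_neg D hmem
      have hpair : 0 < pairf D rhoZ (-(rstep D a u)) := by
        rw [pairf_neg]
        linarith
      have hneg := root_nonneg D F hrel hone hsupp hmem' hpair
      have hub : ∀ b, b ≠ a → u b = 0 := by
        intro b hb
        have h1 := hneg b
        have h2 : rstep D a u b = u b := by simp [rstep, hb]
        have h3 := hpos b
        simp only [Pi.neg_apply] at h1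
        omega
      have hua : 0 < u a := by
        rcases lt_or_eq_of_le (hpos a) with h | h
        · exact h
        · exfalso
          apply root_ne_zero D F hrel hone hu
          funext b
          by_cases hb : b = a
          · subst hb; exact h.symm
          · exact hub b hb
      have hprop : ∀ b, (u b : ℚ) = (u a : ℚ) * ((eps a b : ℤ) : ℚ) := by
        intro b
        by_cases hb : b = a
        · subst hb; simp [eps]
        · rw [hub b hb]; simp [eps, Pi.single_apply, hb]
      have heq := root_eq_of_prop D (URoot_eps D a) hu ((u a : ℚ))
        (by exact_mod_cast hua) hprop
      exact hne heq
    · exact root_nonneg D F hrel hone hsupp hmem hgt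
  · intro h
    have h2 : u = rstep D a (eps a) := by rw [← h, rstep_rstep]
    rw [rstep_eps_self] at h2
    have h3 := hpos a
    rw [h2] at h3
    simp [eps] at h3

lemma posroot_finite (hrel : ∀ (a : Fin n) (v : Fin n → ℤ), F (sgm D a v) = - F v)
    (hone : F rhoZ = 1) :
    {u : Fin n → ℤ | u ∈ URoot D ∧ ∀ b, 0 ≤ u b}.Finite := by
  have hsub : {u : Fin n → ℤ | u ∈ URoot D ∧ ∀ b, 0 ≤ u b} ⊆
      ⋃ p ∈ (F.coeff.support : Set (Fin n → ℤ)),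
        {u | u ∈ URoot D ∧ ∃ k : ℤ, 0 < k ∧ rhoZ - k • Cmul D u = p} := by
    rintro u ⟨hu, hpos⟩
    obtain ⟨k, t', ht', hk, hF⟩ := root_point D F hrel hu
    have hppos := pairf_pos_of_nonneg D F hrel hone hu hpos
    have hkpos : 0 < k := by
      have h1 : (0:ℚ) < (t' : ℚ) := by exact_mod_cast ht'
      have : (0:ℚ) < (k:ℚ) := by rw [hk]; exact mul_pos h1 hppos
      exact_mod_cast this
    have hFp : F (rhoZ - k • Cmul D u) ≠ 0 := by rw [hF, hone]; norm_num
    apply Set.mem_biUnion (Finset.mem_coe.mpr (Finsupp.mem_support_iff.mpr hFp))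
    exact ⟨hu, k, hkpos, rfl⟩
  apply Set.Finite.subset (Set.Finite.biUnion (F.coeff.support.finite_toSet) ?_) hsub
  intro p _
  apply Set.Subsingleton.finite
  rintro u ⟨hu, k, hk, hp⟩ u' ⟨hu', k', hk', hp'⟩
  have he : k • Cmul D u = k' • Cmul D u' := by
    funext b
    have hb := congrFun (hp.trans hp'.symm) b
    simp only [Pi.sub_apply] at hb
    linarith [hb]
  have hz : ∀ b', ∑ a, (D.C b' a : ℚ) * ((k':ℚ) * (u' a:ℚ) - (k:ℚ) * (u a:ℚ)) = 0 := by
    intro b'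
    have h1 := congrFun he b'
    simp only [Pi.smul_apply, smul_eq_mul, Cmul] at h1
    have h2 := congrArg (fun z : ℤ => (z:ℚ)) h1
    push_cast at h2
    have h3 : ∑ a, (D.C b' a:ℚ) * ((k':ℚ) * (u' a:ℚ) - (k:ℚ) * (u a:ℚ))
        = (k':ℚ) * (∑ a, (D.C b' a:ℚ) * (u' a:ℚ)) - (k:ℚ) * ∑ a, (D.C b' a:ℚ) * (u a:ℚ) := by
      rw [Finset.mul_sum, Finset.mul_sum, ← Finset.sum_sub_distrib]
      apply Finset.sum_congr rfl
      intro a _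
      ring
    rw [h3, ← h2, sub_self]
  have hzz := cmulQ_inj D _ hz
  have hq : 0 < (k:ℚ)/(k':ℚ) := by
    apply div_pos
    · exact_mod_cast hk
    · exact_mod_cast hk'
  have hprop : ∀ b, (u' b : ℚ) = ((k:ℚ)/(k':ℚ)) * (u b : ℚ) := by
    intro b
    have h4 := congrFun hzz b
    simp only [Pi.zero_apply] at h4
    have hk'0 : (k':ℚ) ≠ 0 := by
      have : (0:ℚ) < (k':ℚ) := by exact_mod_cast hk'
      exact ne_of_gt this
    field_simp
    linarith [h4]
  exact (root_eq_of_prop D hu hu' _ hq hprop).symm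

end Statement17Aux8

section Statement17Aux9

open AddMonoidAlgebra

variable {n : ℕ} (D : CartanDatum n)

lemma reflMap_apply (a : Fin n) (x : Fin n → ℚ) (b : Fin n) :
    reflMap D a x b = x b - x a * (D.C b a : ℚ) := by
  simp only [reflMap, LinearMap.sub_apply, LinearMap.id_apply, Pi.sub_apply,
    LinearMap.smulRight_apply, LinearMap.proj_apply, Pi.smul_apply, smul_eq_mul]

lemma reflMap_cast (a : Fin n) (v : Fin n → ℤ) :
    reflMap D a (fun b => ((v b : ℤ):ℚ)) = fun b => ((sgm D a v b : ℤ):ℚ) := by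
  funext b
  rw [reflMap_apply]
  simp only [sgm]
  push_cast
  ring

/-- The linear map of a word of simple reflections. -/
noncomputable def wmap (l : List (Fin n)) : (Fin n → ℚ) →ₗ[ℚ] (Fin n → ℚ) :=
  (l.map (reflMap D)).prod

lemma wmap_mem (l : List (Fin n)) : wmap D l ∈ weylGroup D := by
  apply Submonoid.list_prod_mem
  intro f hf
  rw [List.mem_map] at hf
  obtain ⟨a, _, rfl⟩ := hf
  exact Submonoid.subset_closure (Set.mem_range_self a)

lemma wmap_cast (l : List (Fin n)) (v : Fin n → ℤ) :
    wmap D l (fun b => ((v b : ℤ):ℚ)) = fun b => ((wword D l v b : ℤ):ℚ) := by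
  induction l with
  | nil => rfl
  | cons a l ih =>
    rw [wmap, List.map_cons, List.prod_cons, Module.End.mul_apply]
    rw [show (l.map (reflMap D)).prod = wmap D l from rfl]
    rw [ih, reflMap_cast]
    rfl

lemma rootSet_lattice {β : Fin n → ℚ} (hβ : β ∈ rootSet D) :
    ∃ u, u ∈ URoot D ∧ β = fun b => ((Cmul D u b : ℤ) : ℚ) := by
  obtain ⟨w, hw, c, rfl⟩ := hβ
  have main : ∀ w ∈ Submonoid.closure (Set.range (reflMap D)),
      ∀ u, u ∈ URoot D → ∃ u', u' ∈ URoot D ∧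
        w (fun b => ((Cmul D u b : ℤ):ℚ)) = fun b => ((Cmul D u' b:ℤ):ℚ) := by
    intro w hw
    induction hw using Submonoid.closure_induction with
    | mem x hx =>
      obtain ⟨a, rfl⟩ := hx
      intro u hu
      refine ⟨rstep D a u, URoot_rstep D a hu, ?_⟩
      rw [reflMap_cast, ← Cmul_rstep]
    | one =>
      intro u hu
      exact ⟨u, hu, rfl⟩
    | mul x y hx hy ihx ihy =>
      intro u hu
      obtain ⟨u1, hu1, h1⟩ := ihy u hu
      obtain ⟨u2, hu2, h2⟩ := ihx u1 hu1
      refine ⟨u2, hu2, ?_⟩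
      rw [Module.End.mul_apply, h1, h2]
  have hc : (fun b => (D.C b c : ℚ)) = fun b => ((Cmul D (eps c) b : ℤ):ℚ) := by
    funext b
    rw [← acol_eq_Cmul_eps]
    rfl
  obtain ⟨u', hu', h'⟩ := main w hw (eps c) (URoot_eps D c)
  refine ⟨u', hu', ?_⟩
  rw [hc, h']

lemma lattice_rootSet {u : Fin n → ℤ} (hu : u ∈ URoot D) :
    (fun b => ((Cmul D u b : ℤ):ℚ)) ∈ rootSet D := by
  obtain ⟨l, c, rfl⟩ := hu
  refine ⟨wmap D l, wmap_mem D l, c, ?_⟩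
  have h1 : (fun b => (D.C b c : ℚ)) = fun b => ((Cmul D (eps c) b : ℤ):ℚ) := by
    funext b
    rw [← acol_eq_Cmul_eps]
    rfl
  rw [h1, wmap_cast, wword_Cmul]

/-- Characterization of the positive-root index set of the statement. -/
lemma posRoot_char :
    {β : Fin n → ℤ | (fun b => ((β b : ℤ) : ℚ)) ∈ posRootSet D}
      = (fun u => Cmul D u) '' {u : Fin n → ℤ | u ∈ URoot D ∧ ∀ b, 0 ≤ u b} := by
  ext β
  constructor
  · rintro ⟨hroot, c, hc0, hcone⟩
    obtain ⟨u, hu, hcast⟩ := rootSet_lattice D hroot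
    have hβu : β = Cmul D u := by
      funext b
      have := congrFun hcast b
      exact_mod_cast this
    have hcu : ∀ a, c a = (u a : ℚ) := by
      have hz : ∀ b', ∑ a, (D.C b' a : ℚ) * (c a - (u a : ℚ)) = 0 := by
        intro b'
        have h1 := hcone b'
        have h2 := congrFun hcast b'
        -- h2 : (β b' : ℚ) = (Cmul D u b' : ℚ)
        have h3 : (∑ a, (D.C b' a : ℚ) * (u a : ℚ)) = ((Cmul D u b' : ℤ) : ℚ) := by
          simp only [Cmul]
          push_cast
          rfl
        rw [Finset.sum_congr rfl (fun a _ => mul_sub ((D.C b' a : ℚ)) (c a) ((u a : ℚ))),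
            Finset.sum_sub_distrib, h3, ← h1, ← h2]
        exact sub_self _
      have := cmulQ_inj D _ hz
      intro a
      have h4 := congrFun this a
      simp only [Pi.zero_apply] at h4
      linarith
    refine ⟨u, ⟨hu, ?_⟩, hβu.symm⟩
    intro b
    have h5 := hc0 b
    rw [hcu b] at h5
    exact_mod_cast h5
  · rintro ⟨u, ⟨hu, hpos⟩, rfl⟩
    refine ⟨lattice_rootSet D hu, fun a => (u a : ℚ), ?_, ?_⟩
    · intro b
      show (0:ℚ) ≤ (u b : ℚ)
      exact_mod_cast hpos b
    · intro b
      simp only [Cmul]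
      push_cast
      rfl

end Statement17Aux9

section Statement17Aux10

open AddMonoidAlgebra

variable {n : ℕ} (D : CartanDatum n)

lemma Cmul_inj {x y : Fin n → ℤ} (h : Cmul D x = Cmul D y) : x = y := by
  have hz : ∀ b', ∑ a, (D.C b' a : ℚ) * ((x a : ℚ) - (y a : ℚ)) = 0 := by
    intro b'
    have h1 := congrFun h b'
    simp only [Cmul] at h1
    have h2 := congrArg (fun z : ℤ => (z:ℚ)) h1
    push_cast at h2
    rw [Finset.sum_congr rfl (fun a _ => mul_sub ((D.C b' a : ℚ)) _ _), Finset.sum_sub_distrib]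
    rw [h2, sub_self]
  have hzz := cmulQ_inj D _ hz
  funext b
  have h4 := congrFun hzz b
  simp only [Pi.zero_apply] at h4
  have : (x b : ℚ) = (y b : ℚ) := by linarith
  exact_mod_cast this

lemma cdom (w : Fin n → ℕ) (h : ∀ b, Cmul D (fun c => (w c : ℤ)) b ≤ 0) : ∀ c, w c = 0 := by
  by_contra hne
  push_neg at hne
  obtain ⟨c0, hc0⟩ := hne
  have hcq : (fun c => (w c : ℚ)) ≠ 0 := by
    intro h0
    apply hc0
    have := congrFun h0 c0
    simp only [Pi.zero_apply] at this
    exact_mod_cast this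
  have hpos := D.posdef _ hcq
  have hle : (∑ a, ∑ b, (w a : ℚ) * ((D.C a b : ℚ) / (D.t a : ℚ)) * (w b : ℚ)) ≤ 0 := by
    apply Finset.sum_nonpos
    intro a _
    have h1 : ∑ b, (w a : ℚ) * ((D.C a b : ℚ) / (D.t a : ℚ)) * (w b : ℚ)
        = ((w a : ℚ) / (D.t a : ℚ)) * ∑ b, (D.C a b : ℚ) * (w b : ℚ) := by
      rw [Finset.mul_sum]
      apply Finset.sum_congr rfl
      intro b _
      ring
    rw [h1]
    have h2 : (∑ b, (D.C a b : ℚ) * (w b : ℚ)) ≤ 0 := by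
      have h3 : (∑ b, (D.C a b:ℚ)*(w b:ℚ)) = ((Cmul D (fun c => (w c:ℤ)) a : ℤ):ℚ) := by
        simp only [Cmul]
        push_cast
        rfl
      rw [h3]
      exact_mod_cast h a
    have h4 : (0:ℚ) ≤ (w a : ℚ) / (D.t a : ℚ) :=
      div_nonneg (Nat.cast_nonneg _) (le_of_lt (tQ_pos D a))
    exact mul_nonpos_iff.mpr (Or.inl ⟨h4, h2⟩)
  linarith

lemma sgm_rhoZ (a : Fin n) : sgm D a (rhoZ : Fin n → ℤ) = rhoZ - acol D a := by
  funext b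
  simp [sgm, rhoZ, acol]

/-- coefficient-level skew relation for `e^ρ ⬝ g`. -/
lemma coeff_rel (g : LaurentA n)
    (hrelg : ∀ a, reflW D a g = - AddMonoidAlgebra.single (acol D a) 1 * g) :
    ∀ (a : Fin n) (v : Fin n → ℤ),
      (AddMonoidAlgebra.single (rhoZ : Fin n → ℤ) (1:ℤ) * g) (sgm D a v)
        = - (AddMonoidAlgebra.single (rhoZ : Fin n → ℤ) (1:ℤ) * g) v := by
  intro a v
  have hG : reflW D a (AddMonoidAlgebra.single (rhoZ : Fin n → ℤ) (1:ℤ) * g)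
      = - (AddMonoidAlgebra.single (rhoZ : Fin n → ℤ) (1:ℤ) * g) := by
    rw [reflW_eq_hom, map_mul]
    rw [show (reflWHom D a) (AddMonoidAlgebra.single (rhoZ : Fin n → ℤ) (1:ℤ))
        = AddMonoidAlgebra.single (sgm D a (rhoZ : Fin n → ℤ)) (1:ℤ) from ?_]
    · rw [← reflW_eq_hom, hrelg a, sgm_rhoZ]
      have hcomb : AddMonoidAlgebra.single ((rhoZ : Fin n → ℤ) - acol D a) (1:ℤ)
          * (- AddMonoidAlgebra.single (acol D a) 1 * g)
          = - (AddMonoidAlgebra.single (rhoZ : Fin n → ℤ) (1:ℤ) * g) := by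
        have h1 : AddMonoidAlgebra.single ((rhoZ : Fin n → ℤ) - acol D a) (1:ℤ)
            * AddMonoidAlgebra.single (acol D a) 1
            = AddMonoidAlgebra.single (rhoZ : Fin n → ℤ) (1:ℤ) := by
          rw [AddMonoidAlgebra.single_mul_single,
            show (rhoZ : Fin n → ℤ) - acol D a + acol D a = rhoZ by abel]
          norm_num
        calc AddMonoidAlgebra.single ((rhoZ : Fin n → ℤ) - acol D a) (1:ℤ)
            * (- AddMonoidAlgebra.single (acol D a) 1 * g)
            = - ((AddMonoidAlgebra.single ((rhoZ : Fin n → ℤ) - acol D a) (1:ℤ)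
                * AddMonoidAlgebra.single (acol D a) 1) * g) := by ring
          _ = - (AddMonoidAlgebra.single (rhoZ : Fin n → ℤ) (1:ℤ) * g) := by rw [h1]
      exact hcomb
    · rw [← reflW_eq_hom]
      show reflW D a _ = _
      rw [reflW_eq]
      exact AddMonoidAlgebra.mapDomain_single
  have h2 := congrFun (congrArg (fun f : LaurentA n => f.coeff.toFun) hG) (sgm D a v)
  -- use coefficient formula instead
  have h3 : (reflW D a (AddMonoidAlgebra.single (rhoZ : Fin n → ℤ) (1:ℤ) * g)) (sgm D a v)
      = (AddMonoidAlgebra.single (rhoZ : Fin n → ℤ) (1:ℤ) * g) v := by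
    rw [reflW_coeff, sgm_sgm]
  rw [hG] at h3
  have h4 : (-(AddMonoidAlgebra.single (rhoZ : Fin n → ℤ) (1:ℤ) * g)) (sgm D a v)
      = -((AddMonoidAlgebra.single (rhoZ : Fin n → ℤ) (1:ℤ) * g) (sgm D a v)) := rfl
  rw [h4] at h3
  linarith [h3]

lemma shift_coeff (g : LaurentA n) (v : Fin n → ℤ) :
    (AddMonoidAlgebra.single (rhoZ : Fin n → ℤ) (1:ℤ) * g) v = g (v - rhoZ) := by
  rw [AddMonoidAlgebra.coeff_single_mul_apply]
  rw [one_mul]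
  congr 1
  abel

/-- The uniqueness walk: a skew element supported below `0` with vanishing
constant coefficient is zero. -/
lemma walk_unique (g : LaurentA n)
    (hrelg : ∀ a, reflW D a g = - AddMonoidAlgebra.single (acol D a) 1 * g)
    (hsuppg : ∀ v ∈ g.coeff.support, -v ∈ Qplus D)
    (hg0 : g 0 = 0) : g = 0 := by
  classical
  by_contra hne
  set G : LaurentA n := AddMonoidAlgebra.single (rhoZ : Fin n → ℤ) (1:ℤ) * g with hGdef
  have hGrel := coeff_rel D g hrelg
  have hGco : ∀ v, G v = g (v - rhoZ) := shift_coeff g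
  have hGsupp : ∀ v ∈ G.coeff.support, ∃ w : Fin n → ℕ,
      (rhoZ : Fin n → ℤ) - v = Cmul D (fun c => (w c : ℤ)) := by
    intro v hv
    rw [Finsupp.mem_support_iff, hGco] at hv
    have h1 := hsuppg _ (Finsupp.mem_support_iff.mpr hv)
    obtain ⟨w, hw⟩ := h1
    refine ⟨w, ?_⟩
    rw [← hw]
    abel
  have hGrho : G rhoZ = 0 := by rw [hGco, sub_self, hg0]
  have hGne : G ≠ 0 := by
    intro h0
    apply hne
    have hinv : AddMonoidAlgebra.single (-(rhoZ : Fin n → ℤ)) (1:ℤ) * G = g := by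
      rw [hGdef, ← mul_assoc, AddMonoidAlgebra.single_mul_single]
      rw [show -(rhoZ : Fin n → ℤ) + rhoZ = 0 by abel]
      rw [show (1:ℤ) * 1 = 1 by norm_num, ← AddMonoidAlgebra.one_def, one_mul]
    rw [← hinv, h0, mul_zero]
  obtain ⟨v1, hv1⟩ := Finsupp.support_nonempty_iff.mpr (AddMonoidAlgebra.coeff_eq_zero.not.mpr hGne)
  have huniq : ∀ (w w' : Fin n → ℕ),
      Cmul D (fun c => (w c:ℤ)) = Cmul D (fun c => (w' c:ℤ)) → w = w' := by
    intro w w' hww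
    have := Cmul_inj D hww
    funext c
    have h1 := congrFun this c
    exact_mod_cast h1
  set msr : (Fin n → ℤ) → ℕ := fun v =>
    if h : ∃ w : Fin n → ℕ, (rhoZ : Fin n → ℤ) - v = Cmul D (fun c => (w c : ℤ))
    then ∑ b, (Classical.choose h) b else 0 with hmsr
  have hmval : ∀ (v : Fin n → ℤ) (w : Fin n → ℕ),
      ((rhoZ : Fin n → ℤ) - v = Cmul D (fun c => (w c:ℤ))) → msr v = ∑ b, w b := by
    intro v w hw
    have hex : ∃ w' : Fin n → ℕ, (rhoZ : Fin n → ℤ) - v = Cmul D (fun c => (w' c:ℤ)) := ⟨w, hw⟩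
    rw [hmsr]
    simp only [dif_pos hex]
    have hspec := Classical.choose_spec hex
    have heq : Classical.choose hex = w := huniq _ _ (by rw [← hspec, ← hw])
    rw [heq]
  obtain ⟨v0, hv0mem, hv0min⟩ := Finset.exists_min_image G.coeff.support msr ⟨v1, hv1⟩
  obtain ⟨w0, hw0⟩ := hGsupp v0 hv0mem
  have hnoneg : ∀ a, 0 ≤ v0 a := by
    intro a
    by_contra hneg
    push_neg at hneg
    have hv1mem : sgm D a v0 ∈ G.coeff.support := by
      rw [Finsupp.mem_support_iff, hGrel a v0]
      simp only [neg_ne_zero]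
      exact Finsupp.mem_support_iff.mp hv0mem
    obtain ⟨w1, hw1⟩ := hGsupp _ hv1mem
    have hkey : (fun c => (w1 c : ℤ)) = (fun c => (w0 c : ℤ)) + (v0 a) • eps a := by
      apply Cmul_inj D
      rw [← hw1]
      have hCadd : Cmul D ((fun c => (w0 c : ℤ)) + (v0 a) • eps a)
          = Cmul D (fun c => (w0 c : ℤ)) + (v0 a) • Cmul D (eps a) := by
        funext b
        simp only [Cmul, Pi.add_apply, Pi.smul_apply, smul_eq_mul]
        rw [Finset.mul_sum, ← Finset.sum_add_distrib]
        apply Finset.sum_congr rfl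
        intro c _
        ring
      rw [hCadd, ← hw0, ← acol_eq_Cmul_eps]
      funext b
      simp only [Pi.sub_apply, Pi.add_apply, Pi.smul_apply, smul_eq_mul, sgm, acol]
      ring
    have hsum : (∑ b, (w1 b : ℤ)) = (∑ b, (w0 b : ℤ)) + v0 a := by
      have h5 : ∀ b, (w1 b : ℤ) = (w0 b : ℤ) + v0 a * eps a b := by
        intro b
        have h6 := congrFun hkey b
        simpa using h6
      rw [Finset.sum_congr rfl (fun b _ => h5 b), Finset.sum_add_distrib]
      congr 1
      rw [← Finset.mul_sum]
      have h7 : (∑ b, eps a b) = 1 := by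
        classical
        rw [Finset.sum_eq_single a]
        · simp [eps]
        · intro b _ hb
          simp [eps, Pi.single_apply, hb]
        · intro h
          exact absurd (Finset.mem_univ a) h
      rw [h7, mul_one]
    have hlt : msr (sgm D a v0) < msr v0 := by
      rw [hmval _ w1 hw1, hmval _ w0 hw0]
      have h8 : (∑ b, (w1 b : ℤ)) < ∑ b, (w0 b : ℤ) := by omega
      have h9 : ((∑ b, w1 b : ℕ) : ℤ) = ∑ b, (w1 b : ℤ) := by push_cast; rfl
      have h10 : ((∑ b, w0 b : ℕ) : ℤ) = ∑ b, (w0 b : ℤ) := by push_cast; rfl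
      omega
    exact absurd (hv0min _ hv1mem) (by omega)
  have hpos1 : ∀ a, 1 ≤ v0 a := by
    intro a
    rcases lt_or_eq_of_le (hnoneg a) with h | h
    · omega
    · exfalso
      have hfix : sgm D a v0 = v0 := by
        funext b
        simp only [sgm, ← h]
        ring
      have h11 := hGrel a v0
      rw [hfix] at h11
      have hG0 : G v0 = 0 := by linarith [h11]
      exact (Finsupp.mem_support_iff.mp hv0mem) hG0
  have hcle : ∀ b, Cmul D (fun c => (w0 c : ℤ)) b ≤ 0 := by
    intro b
    have h12 := congrFun hw0 b
    simp only [Pi.sub_apply] at h12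
    have h13 := hpos1 b
    have h14 : (rhoZ : Fin n → ℤ) b = 1 := rfl
    omega
  have hw00 := cdom D w0 hcle
  have hv0rho : v0 = rhoZ := by
    have h3 : (rhoZ : Fin n → ℤ) - v0 = 0 := by
      rw [hw0]
      funext b
      simp only [Cmul, Pi.zero_apply]
      apply Finset.sum_eq_zero
      intro c _
      rw [hw00 c]
      simp
    funext b
    have h15 := congrFun h3 b
    simp only [Pi.sub_apply, Pi.zero_apply] at h15
    omega
  rw [hv0rho] at hv0mem
  exact (Finsupp.mem_support_iff.mp hv0mem) hGrho

end Statement17Aux10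

section Statement17Aux11

open AddMonoidAlgebra

variable {n : ℕ} (D : CartanDatum n) (F : LaurentA n)

lemma sgm_neg (a : Fin n) (x : Fin n → ℤ) : sgm D a (-x) = - sgm D a x := by
  funext b
  simp only [sgm, Pi.neg_apply]
  ring

lemma Cmul_neg (x : Fin n → ℤ) : Cmul D (-x) = - Cmul D x := by
  funext b
  simp only [Cmul, Pi.neg_apply, ← Finset.sum_neg_distrib]
  apply Finset.sum_congr rfl
  intro c _
  ring

lemma Cmul_eps_ne_zero (hrel : ∀ (a : Fin n) (v : Fin n → ℤ), F (sgm D a v) = - F v)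
    (hone : F rhoZ = 1) {u : Fin n → ℤ} (hu : u ∈ URoot D) : Cmul D u ≠ 0 := by
  intro h0
  apply root_ne_zero D F hrel hone hu
  apply Cmul_inj D
  rw [h0]
  funext b
  simp only [Cmul, Pi.zero_apply]
  symm
  apply Finset.sum_eq_zero
  intro c _
  simp

lemma Dprod_skew (hrel : ∀ (a : Fin n) (v : Fin n → ℤ), F (sgm D a v) = - F v)
    (hone : F rhoZ = 1) (hsupp : ∀ v ∈ F.coeff.support, rhoZ - v ∈ Qplus D) (a : Fin n) :
    reflW D a (∏ u ∈ (posroot_finite D F hrel hone).toFinset,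
        ((1 : LaurentA n) - AddMonoidAlgebra.single (-(Cmul D u)) 1))
      = - AddMonoidAlgebra.single (acol D a) 1 *
        (∏ u ∈ (posroot_finite D F hrel hone).toFinset,
          ((1 : LaurentA n) - AddMonoidAlgebra.single (-(Cmul D u)) 1)) := by
  classical
  set P := (posroot_finite D F hrel hone).toFinset with hP
  have hmemP : ∀ u, u ∈ P ↔ (u ∈ URoot D ∧ ∀ b, 0 ≤ u b) := fun u =>
    Set.Finite.mem_toFinset _
  have hepsnn : ∀ b, 0 ≤ eps a b := by
    intro b
    by_cases hb : b = a
    · subst hb; simp [eps]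
    · simp [eps, Pi.single_apply, hb]
  have hepsP : eps a ∈ P := (hmemP _).mpr ⟨URoot_eps D a, hepsnn⟩
  have h1 : reflW D a (∏ u ∈ P, ((1 : LaurentA n) - AddMonoidAlgebra.single (-(Cmul D u)) 1))
      = ∏ u ∈ P, reflW D a ((1 : LaurentA n) - AddMonoidAlgebra.single (-(Cmul D u)) 1) := by
    rw [reflW_eq_hom]
    exact map_prod (reflWHom D a) _ P
  have h2 : ∀ u, reflW D a ((1:LaurentA n) - AddMonoidAlgebra.single (-(Cmul D u)) 1)
      = (1:LaurentA n) - AddMonoidAlgebra.single (-(Cmul D (rstep D a u))) 1 := by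
    intro u
    rw [reflW_eq_hom, map_sub, map_one, ← reflW_eq_hom]
    have h3 : reflW D a (AddMonoidAlgebra.single (-(Cmul D u)) (1:ℤ))
        = AddMonoidAlgebra.single (sgm D a (-(Cmul D u))) 1 := by
      rw [reflW_eq]
      exact AddMonoidAlgebra.mapDomain_single
    rw [h3, sgm_neg, ← Cmul_rstep]
  rw [h1, Finset.prod_congr rfl (fun u _ => h2 u)]
  rw [← Finset.mul_prod_erase P _ hepsP]
  rw [← Finset.mul_prod_erase P
    (fun u => (1:LaurentA n) - AddMonoidAlgebra.single (-(Cmul D u)) 1) hepsP]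
  have h4 : ∏ u ∈ P.erase (eps a),
      ((1:LaurentA n) - AddMonoidAlgebra.single (-(Cmul D (rstep D a u))) 1)
      = ∏ u ∈ P.erase (eps a), ((1:LaurentA n) - AddMonoidAlgebra.single (-(Cmul D u)) 1) := by
    apply Finset.prod_nbij' (rstep D a) (rstep D a)
    · intro u hu
      rw [Finset.mem_erase] at hu
      obtain ⟨hune, huP⟩ := hu
      obtain ⟨hu1, hu2⟩ := (hmemP u).mp huP
      obtain ⟨k1, k2, k3⟩ := key_step D F hrel hone hsupp a hu1 hu2 hune
      rw [Finset.mem_erase]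
      exact ⟨k3, (hmemP _).mpr ⟨k1, k2⟩⟩
    · intro u hu
      rw [Finset.mem_erase] at hu
      obtain ⟨hune, huP⟩ := hu
      obtain ⟨hu1, hu2⟩ := (hmemP u).mp huP
      obtain ⟨k1, k2, k3⟩ := key_step D F hrel hone hsupp a hu1 hu2 hune
      rw [Finset.mem_erase]
      exact ⟨k3, (hmemP _).mpr ⟨k1, k2⟩⟩
    · intro u _
      exact rstep_rstep D a u
    · intro u _
      exact rstep_rstep D a u
    · intro u _
      rfl
  rw [h4]
  have h5 : Cmul D (rstep D a (eps a)) = -(acol D a) := by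
    rw [rstep_eps_self, Cmul_neg, acol_eq_Cmul_eps]
  rw [h5]
  have hss : AddMonoidAlgebra.single (acol D a) (1:ℤ)
      * AddMonoidAlgebra.single (-(acol D a)) 1 = 1 := by
    rw [AddMonoidAlgebra.single_mul_single,
      show acol D a + -(acol D a) = 0 by abel,
      show (1:ℤ) * 1 = 1 by norm_num, ← AddMonoidAlgebra.one_def]
  have hfactor : (1:LaurentA n) - AddMonoidAlgebra.single (-(-(acol D a))) 1
      = - AddMonoidAlgebra.single (acol D a) 1
        * ((1:LaurentA n) - AddMonoidAlgebra.single (-(acol D a)) 1) := by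
    rw [show -(-(acol D a)) = acol D a by abel]
    rw [mul_sub, mul_one]
    rw [show (- AddMonoidAlgebra.single (acol D a) (1:ℤ)) * AddMonoidAlgebra.single (-(acol D a)) 1
      = -(1:LaurentA n) by rw [neg_mul, hss]]
    ring
  rw [← acol_eq_Cmul_eps, hfactor]
  ring

lemma Dprod_supp_coeff (hrel : ∀ (a : Fin n) (v : Fin n → ℤ), F (sgm D a v) = - F v)
    (hone : F rhoZ = 1) :
    (∀ v ∈ ((∏ u ∈ (posroot_finite D F hrel hone).toFinset,
        ((1 : LaurentA n) - AddMonoidAlgebra.single (-(Cmul D u)) 1) : LaurentA n)).coeff.support,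
        -v ∈ Qplus D)
    ∧ ((∏ u ∈ (posroot_finite D F hrel hone).toFinset,
        ((1 : LaurentA n) - AddMonoidAlgebra.single (-(Cmul D u)) 1) : LaurentA n)) 0 = 1 := by
  classical
  set P := (posroot_finite D F hrel hone).toFinset with hP
  have hmemP : ∀ u, u ∈ P ↔ (u ∈ URoot D ∧ ∀ b, 0 ≤ u b) := fun u =>
    Set.Finite.mem_toFinset _
  have hsuppfac : ∀ u ∈ P,
      ∀ v ∈ (((1:LaurentA n) - AddMonoidAlgebra.single (-(Cmul D u)) 1 : LaurentA n)).coeff.support,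
      (fun _ : Fin n → ℤ => (0 : Fin n → ℤ)) u - v ∈ Qplus D := by
    intro u huP v hv
    obtain ⟨hu1, hu2⟩ := (hmemP u).mp huP
    rw [Finsupp.mem_support_iff] at hv
    have hco : (((1:LaurentA n) - AddMonoidAlgebra.single (-(Cmul D u)) 1 : LaurentA n)) v
        = (if (0 : Fin n → ℤ) = v then (1:ℤ) else 0) - (if -(Cmul D u) = v then (1:ℤ) else 0) := by
      rw [AddMonoidAlgebra.coeff_sub, Finsupp.sub_apply, AddMonoidAlgebra.one_def]
      rw [AddMonoidAlgebra.coeff_single_apply, AddMonoidAlgebra.coeff_single_apply]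
    rw [hco] at hv
    by_cases hv0 : (0 : Fin n → ℤ) = v
    · rw [← hv0]
      simpa using Qplus_zero D
    · rw [if_neg hv0] at hv
      by_cases hvβ : -(Cmul D u) = v
      · rw [← hvβ]
        have : (fun _ : Fin n → ℤ => (0 : Fin n → ℤ)) u - -(Cmul D u) = Cmul D u := by
          simp
        rw [this]
        refine ⟨fun b => (u b).toNat, ?_⟩
        show Cmul D u = Cmul D (fun c => (((u c).toNat : ℕ) : ℤ))
        have harg : (fun c => (((u c).toNat : ℕ) : ℤ)) = u := by
          funext c
          exact Int.toNat_of_nonneg (hu2 c)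
        rw [harg]
      · rw [if_neg hvβ] at hv
        simp at hv
  have hmain := prod_supp_coeff D P
    (fun u => (1:LaurentA n) - AddMonoidAlgebra.single (-(Cmul D u)) 1)
    (fun _ => (0 : Fin n → ℤ)) hsuppfac
  have hzero : (∑ _u ∈ P, (0 : Fin n → ℤ)) = 0 := Finset.sum_const_zero
  constructor
  · intro v hv
    have := hmain.1 v hv
    rw [hzero, zero_sub] at this
    exact this
  · have h2 := hmain.2
    rw [hzero] at h2
    rw [h2]
    apply Finset.prod_eq_one
    intro u huP
    obtain ⟨hu1, _⟩ := (hmemP u).mp huP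
    have hne := Cmul_eps_ne_zero D F hrel hone hu1
    rw [AddMonoidAlgebra.coeff_sub, Finsupp.sub_apply, AddMonoidAlgebra.one_def, AddMonoidAlgebra.coeff_single_apply, AddMonoidAlgebra.coeff_single_apply]
    rw [if_pos rfl, if_neg, sub_zero]
    intro h0
    apply hne
    have := congrArg (fun x : Fin n → ℤ => -x) h0
    simpa using this
  
end Statement17Aux11

/-- Lemma: the Jacobian `det(∂Q^{(a)}_1/∂x_b)`.
If `Q^{(1)}_1, …, Q^{(n)}_1 ∈ ℤ[x_1^{±1},…,x_n^{±1}]` are Weyl-group-invariant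
Laurent polynomials of the form `Q^{(a)}_1 = x_a(1 + Σ_{β≠0} c_β e^{−β})`,
`β ∈ Σ_b ℤ_{≥0} α_b`, then `det(∂Q^{(a)}_1/∂x_b) = ∏_{α>0}(1 − e^{−α})`,
the product over the positive roots of `X_n`. -/
theorem statement17 (n : ℕ) (D : CartanDatum n)
    (Q : Fin n → LaurentA n)
    (hinv : ∀ a b, reflW D a (Q b) = Q b)
    (hlead : ∀ a : Fin n, (Q a).coeff (Pi.single a (1 : ℤ)) = 1)
    (hsupp : ∀ a : Fin n, ∀ μ ∈ (Q a).coeff.support, μ ≠ Pi.single a (1 : ℤ) →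
      ∃ u : Fin n → ℕ, ∀ b, (Pi.single a 1 : Fin n → ℤ) b - μ b = ∑ c, D.C b c * (u c : ℤ)) :
    (Matrix.of fun a b => pder b (Q a)).det
      = ∏ᶠ β ∈ {β : Fin n → ℤ | (fun b => (β b : ℚ)) ∈ posRootSet D},
          ((1 : LaurentA n) - AddMonoidAlgebra.single (-β) 1) := by
  classical
  set N : LaurentA n := (Matrix.of fun a b => pder b (Q a)).det with hN
  have hrelN : ∀ a, reflW D a N = - AddMonoidAlgebra.single (acol D a) 1 * N :=
    fun a => reflW_det D Q hinv a
  have hN0 : N 0 = 1 := det_coeff_zero D Q hlead hsupp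
  have hNsupp : ∀ v ∈ N.coeff.support, -v ∈ Qplus D := det_supp D Q hsupp
  set F : LaurentA n := AddMonoidAlgebra.single (rhoZ : Fin n → ℤ) (1:ℤ) * N with hF
  have hrelF : ∀ (a : Fin n) (v : Fin n → ℤ), F (sgm D a v) = - F v := coeff_rel D N hrelN
  have honeF : F rhoZ = 1 := by
    rw [hF, shift_coeff, sub_self, hN0]
  have hsuppF : ∀ v ∈ F.coeff.support, rhoZ - v ∈ Qplus D := by
    intro v hv
    rw [Finsupp.mem_support_iff, hF, shift_coeff] at hv
    have h1 := hNsupp _ (Finsupp.mem_support_iff.mpr hv)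
    rw [show -(v - (rhoZ : Fin n → ℤ)) = rhoZ - v by abel] at h1
    exact h1
  set P := (posroot_finite D F hrelF honeF).toFinset with hP
  set Dp : LaurentA n := ∏ u ∈ P, ((1 : LaurentA n) - AddMonoidAlgebra.single (-(Cmul D u)) 1)
    with hDp
  have hRHS : (∏ᶠ β ∈ {β : Fin n → ℤ | (fun b => (β b : ℚ)) ∈ posRootSet D},
      ((1 : LaurentA n) - AddMonoidAlgebra.single (-β) 1)) = Dp := by
    have hset : {β : Fin n → ℤ | (fun b => ((β b : ℤ) : ℚ)) ∈ posRootSet D}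
        = ↑(P.image (fun u => Cmul D u)) := by
      rw [posRoot_char D, Finset.coe_image, hP, Set.Finite.coe_toFinset]
    rw [hset, finprod_mem_coe_finset, Finset.prod_image, hDp]
    intro x _ y _ hxy
    exact Cmul_inj D hxy
  rw [hRHS]
  have hrelDp : ∀ a, reflW D a Dp = - AddMonoidAlgebra.single (acol D a) 1 * Dp :=
    fun a => Dprod_skew D F hrelF honeF hsuppF a
  obtain ⟨hDsupp, hD0⟩ := Dprod_supp_coeff D F hrelF honeF
  have hwalk : N - Dp = 0 := by
    apply walk_unique D
    · intro a
      rw [reflW_eq_hom, map_sub, ← reflW_eq_hom, ← reflW_eq_hom, hrelN a, hrelDp a]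
      ring
    · intro v hv
      have hmem := Finsupp.support_sub hv
      rw [Finset.mem_union] at hmem
      rcases hmem with h | h
      · exact hNsupp v h
      · exact hDsupp v h
    · rw [AddMonoidAlgebra.coeff_sub, Finsupp.sub_apply, hN0, hD0, sub_self]
  exact sub_eq_zero.mp hwalk

end FermionicPaper
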